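/- arXiv:1501.03986 — 3 statements merged into one kernel-verified Lean document; each statement's English description precedes it below -/
import Mathlib

section
/- Let X be a connected compact plane set such that the normed algebra D¹(X) with norm ‖f‖ = |f|_X + |f'|_X is complete, and suppose f ∈ D¹(X) satisfies f' = 0 on X. Then f is constant. -/
open Complex Set

/-- The uniform norm of `f` on `X`. -/
noncomputable def UnifNorm (X : Set ℂ) (f : ℂ → ℂ) : ℝ :=
  sSup ((fun z => ‖f z‖) '' X)

/-- `f` is continuously differentiable on `X` with derivative `f'`
(derivative taken as a limit within `X`). -/
def HasD1 (X : Set ℂ) (f f' : ℂ → ℂ) : Prop :=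
  (∀ z ∈ X, HasDerivWithinAt f (f' z) X z) ∧ ContinuousOn f' X

/-- The `D¹`-norm `|f|_X + |f'|_X`. -/
noncomputable def DNorm (X : Set ℂ) (f f' : ℂ → ℂ) : ℝ :=
  UnifNorm X f + UnifNorm X f'

/-- The normed algebra `(D¹(X), ‖·‖)` is complete: every Cauchy sequence in `D¹(X)`
converges in the norm to an element of `D¹(X)`. -/
def D1Complete (X : Set ℂ) : Prop :=
  ∀ f g : ℕ → ℂ → ℂ, (∀ n, HasD1 X (f n) (g n)) →
    (∀ ε > (0:ℝ), ∃ N, ∀ m ≥ N, ∀ n ≥ N,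
      DNorm X (fun z => f m z - f n z) (fun z => g m z - g n z) < ε) →
    ∃ f₀ g₀ : ℂ → ℂ, HasD1 X f₀ g₀ ∧
      Filter.Tendsto (fun n => DNorm X (fun z => f n z - f₀ z) (fun z => g n z - g₀ z))
        Filter.atTop (nhds 0)

noncomputable def Complex.abs : AbsoluteValue ℂ ℝ := NormedField.toAbsoluteValue ℂ

lemma Complex.abs_apply' (z : ℂ) : Complex.abs z = ‖z‖ := rfl

lemma Complex.norm_eq_abs (z : ℂ) : ‖z‖ = Complex.abs z := rfl

@[simp] lemma Complex.abs_ofReal (x : ℝ) : Complex.abs (x : ℂ) = |x| := by simp [Complex.abs_apply']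

@[simp] lemma Complex.abs_two : Complex.abs 2 = 2 := by simp [Complex.abs_apply']

lemma Complex.continuous_abs : Continuous Complex.abs := continuous_norm

noncomputable def eps16 (k : ℕ) : ℝ := (1/2 : ℝ) ^ (k*k + 5*k)

lemma eps16_pos (k : ℕ) : 0 < eps16 k := by unfold eps16; positivity

lemma eps16_succ (k : ℕ) : eps16 (k+1) = eps16 k * (1/2:ℝ)^(2*k+6) := by
  unfold eps16; rw [← pow_add]; ring_nf

lemma eps16_succ_le (k : ℕ) : eps16 (k+1) ≤ eps16 k / 64 := by
  rw [eps16_succ]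
  have h : ((1:ℝ)/2)^(2*k+6) ≤ (1/2)^6 :=
    pow_le_pow_of_le_one (by norm_num) (by norm_num) (by omega)
  nlinarith [eps16_pos k]

lemma eps16_succ_le' (k : ℕ) : eps16 (k+1) ≤ eps16 k / 2 := by
  have := eps16_succ_le k; have := eps16_pos k; linarith

lemma eps16_geom (j i : ℕ) : eps16 (j + i) ≤ eps16 j * (1/2:ℝ)^i := by
  induction i with
  | zero => simp
  | succ i ih =>
    have h := eps16_succ_le' (j + i)
    calc eps16 (j + (i+1)) = eps16 ((j+i)+1) := by ring_nf
    _ ≤ eps16 (j+i)/2 := h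
    _ ≤ (eps16 j * (1/2:ℝ)^i)/2 := by linarith
    _ = eps16 j * (1/2:ℝ)^(i+1) := by ring

lemma eps16_tail (j N : ℕ) : ∑ k ∈ Finset.Ico j N, eps16 k ≤ 2 * eps16 j := by
  rcases le_or_gt j N with h | h
  · rw [Finset.sum_Ico_eq_sum_range]
    calc ∑ i ∈ Finset.range (N - j), eps16 (j + i)
        ≤ ∑ i ∈ Finset.range (N - j), eps16 j * (1/2:ℝ)^i :=
          Finset.sum_le_sum fun i _ => eps16_geom j i
      _ = eps16 j * ∑ i ∈ Finset.range (N - j), (1/2:ℝ)^i := by rw [Finset.mul_sum]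
      _ ≤ eps16 j * 2 := by
          have := sum_geometric_two_le (N - j)
          have h0 := (eps16_pos j).le
          nlinarith
      _ = 2 * eps16 j := by ring
  · rw [Finset.Ico_eq_empty (by omega)]
    simp; nlinarith [eps16_pos j]

lemma eps16_anti : Antitone eps16 :=
  antitone_nat_of_succ_le fun n => by have := eps16_succ_le' n; have := eps16_pos n; linarith

lemma eps16_le_pow (k : ℕ) : eps16 k ≤ (1/2:ℝ)^k :=
  pow_le_pow_of_le_one (by norm_num) (by norm_num) (by nlinarith)

lemma one_sub_pow_abs_le {t : ℂ} (ht : Complex.abs t ≤ 1) (n : ℕ) :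
    Complex.abs (1 - t ^ n) ≤ n * Complex.abs (1 - t) := by
  induction n with
  | zero => simp
  | succ n ih =>
    have h1 : 1 - t^(n+1) = (1 - t^n) + t^n * (1 - t) := by ring
    calc Complex.abs (1 - t^(n+1)) ≤ Complex.abs (1 - t^n) + Complex.abs (t^n * (1-t)) := by
          rw [h1]; exact Complex.abs.add_le _ _
    _ ≤ n * Complex.abs (1-t) + 1 * Complex.abs (1-t) := by
        rw [map_mul, map_pow]
        exact add_le_add ih (mul_le_mul_of_nonneg_right
          (pow_le_one₀ (Complex.abs.nonneg t) ht) (Complex.abs.nonneg _))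
    _ = ((n+1 : ℕ) : ℝ) * Complex.abs (1-t) := by push_cast; ring

lemma one_sub_pow_abs_ge {t : ℂ} (h : (Complex.abs t)^n ≤ 1/2) :
    1/2 ≤ Complex.abs (1 - t ^ n) := by
  have h1 : (1:ℝ) = Complex.abs ((1 - t^n) + t^n) := by simp
  have h2 : Complex.abs ((1 - t^n) + t^n) ≤ Complex.abs (1 - t^n) + Complex.abs (t^n) :=
    Complex.abs.add_le _ _
  rw [map_pow] at h2
  linarith [h1 ▸ h2]

noncomputable def mkT16 (pick : ℕ → ℝ → ℂ × ℕ) : ℕ → ℝ × (ℂ × ℕ)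
  | 0 => (0, pick 0 0)
  | j+1 =>
      let p := mkT16 pick j
      let S := p.1 + eps16 j * p.2.2
      (S, pick (j+1) S)

lemma mkT16_snd (pick : ℕ → ℝ → ℂ × ℕ) (j : ℕ) :
    (mkT16 pick j).2 = pick j (mkT16 pick j).1 := by
  cases j <;> rfl

lemma mkT16_fst (pick : ℕ → ℝ → ℂ × ℕ) (j : ℕ) :
    (mkT16 pick j).1 = ∑ k ∈ Finset.range j, eps16 k * ((mkT16 pick k).2.2 : ℝ) := by
  induction j with
  | zero => rfl
  | succ j ih =>
    rw [Finset.sum_range_succ, ← ih]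
    rfl

lemma UnifNorm_nonneg (X : Set ℂ) (f : ℂ → ℂ) : 0 ≤ UnifNorm X f :=
  Real.sSup_nonneg (by rintro x ⟨z, _, rfl⟩; exact Complex.abs.nonneg _)

lemma UnifNorm_le (X : Set ℂ) (f : ℂ → ℂ) {B : ℝ} (hB : 0 ≤ B)
    (h : ∀ z ∈ X, Complex.abs (f z) ≤ B) : UnifNorm X f ≤ B :=
  Real.sSup_le (by rintro x ⟨z, hz, rfl⟩; exact h z hz) hB

lemma le_UnifNorm {X : Set ℂ} (hXc : IsCompact X) {f : ℂ → ℂ}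
    (hf : ContinuousOn f X) {z : ℂ} (hz : z ∈ X) :
    Complex.abs (f z) ≤ UnifNorm X f :=
  le_csSup ((hXc.image_of_continuousOn
    (Complex.continuous_abs.comp_continuousOn hf)).bddAbove) (Set.mem_image_of_mem _ hz)

set_option maxHeartbeats 1000000 in
/-- If `X` is a connected compact plane set for which `D¹(X)` is complete, then every
`f ∈ D¹(X)` with `f' = 0` on `X` is constant on `X`. -/
theorem stmt16 (X : Set ℂ) (hXc : IsCompact X) (hconn : IsConnected X)
    (hcomp : D1Complete X) (f f' : ℂ → ℂ) (hf : HasD1 X f f')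
    (hf' : ∀ z ∈ X, f' z = 0) :
    ∀ z ∈ X, ∀ w ∈ X, f z = f w := by
  by_contra hcon
  push_neg at hcon
  obtain ⟨z, hz, v, hv, hzv⟩ := hcon
  -- f has derivative 0 within X at each point
  have hfd : ∀ y ∈ X, HasDerivWithinAt f 0 X y := by
    intro y hy
    have := hf.1 y hy
    rwa [hf' y hy] at this
  have hfc : ContinuousOn f X := fun y hy => (hfd y hy).continuousWithinAt
  -- normalization: construct g with |g| ≤ 1, g = 1 on a nonempty proper closed subset
  obtain ⟨z₀, hz₀X, hmax⟩ := hXc.exists_isMaxOn ⟨z, hz⟩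
    ((Complex.continuous_abs.comp_continuousOn (hfc.sub continuousOn_const)) :
      ContinuousOn (fun y => Complex.abs (f y - f v)) X)
  set c : ℂ := f z₀ - f v with hc_def
  have hmax' : ∀ y ∈ X, Complex.abs (f y - f v) ≤ Complex.abs c := fun y hy => hmax hy
  have hc : c ≠ 0 := by
    intro h0
    have h1 := hmax' z hz
    rw [h0] at h1
    simp only [map_zero] at h1
    have h2 : Complex.abs (f z - f v) = 0 := le_antisymm h1 (Complex.abs.nonneg _)
    rw [map_eq_zero, sub_eq_zero] at h2
    exact hzv h2
  set g : ℂ → ℂ := fun y => (1 + (f y - f v)/c)/2 with hg_def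
  have hgd : ∀ y ∈ X, HasDerivWithinAt g 0 X y := by
    intro y hy
    have h1 := ((((hfd y hy).sub_const (f v)).div_const c).const_add 1).div_const 2
    simpa using h1
  have hgc : ContinuousOn g X := fun y hy => (hgd y hy).continuousWithinAt
  have habs_le : ∀ y ∈ X, Complex.abs ((f y - f v)/c) ≤ 1 := by
    intro y hy
    rw [map_div₀, div_le_one (Complex.abs.pos hc)]
    exact hmax' y hy
  have hgle : ∀ y ∈ X, Complex.abs (g y) ≤ 1 := by
    intro y hy
    have h1 : Complex.abs (1 + (f y - f v)/c) ≤ 2 := by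
      have h2 := Complex.abs.add_le 1 ((f y - f v)/c)
      have h3 := habs_le y hy
      simp only [map_one] at h2
      linarith
    have h4 : Complex.abs (g y) = Complex.abs (1 + (f y - f v)/c) / 2 := by
      rw [hg_def]
      simp [map_div₀]
    rw [h4]
    linarith
  have hglt : ∀ y ∈ X, g y ≠ 1 → Complex.abs (g y) < 1 := by
    intro y hy hne
    rcases lt_or_ge (Complex.abs (g y)) 1 with h | h
    · exact h
    exfalso
    set u : ℂ := (f y - f v)/c with hu_def
    have hu1 : Complex.abs u ≤ 1 := habs_le y hy
    have h2 : (2:ℝ) ≤ Complex.abs (1 + u) := by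
      have : Complex.abs (g y) = Complex.abs (1 + u) / 2 := by
        rw [hg_def]; simp [map_div₀, hu_def]
      rw [this] at h
      linarith
    have hre : u.re ≤ 1 := le_trans (Complex.re_le_norm u) hu1
    have hnsq : u.re^2 + u.im^2 ≤ 1 := by
      have := Complex.sq_norm u
      have h1 : Complex.normSq u ≤ 1 := by
        rw [← this, Complex.norm_eq_abs]; nlinarith [Complex.abs.nonneg u]
      rw [Complex.normSq_apply] at h1; nlinarith
    have h4 : (4:ℝ) ≤ Complex.normSq (1 + u) := by
      rw [← Complex.sq_norm, Complex.norm_eq_abs]; nlinarith [Complex.abs.nonneg (1+u)]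
    rw [Complex.normSq_apply] at h4
    simp only [Complex.add_re, Complex.add_im, Complex.one_re, Complex.one_im] at h4
    -- h4 : 4 ≤ (1 + u.re)^2 + (0 + u.im)^2
    have hre1 : u.re = 1 := by nlinarith
    have him0 : u.im = 0 := by nlinarith
    have hu : u = 1 := Complex.ext (by simp [hre1]) (by simp [him0])
    apply hne
    rw [hg_def]
    simp only [← hu_def, hu]
    norm_num
  have hgz₀ : g z₀ = 1 := by
    rw [hg_def]
    simp only [← hc_def]
    rw [div_self hc]
    norm_num
  have hgv : g v ≠ 1 := by
    rw [hg_def]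
    simp only
    rw [sub_self, zero_div]
    norm_num
  -- E = level set {g = 1}; find a boundary point z₁
  have hEclosed : IsClosed (X ∩ g ⁻¹' {1}) :=
    hgc.preimage_isClosed_of_isClosed hXc.isClosed isClosed_singleton
  have hbdry : ∃ z₁ ∈ X, g z₁ = 1 ∧ ∀ δ > (0:ℝ), ∃ u ∈ X, Complex.abs (u - z₁) < δ ∧ g u ≠ 1 := by
    by_contra hB
    push_neg at hB
    have hall : ∀ p : ℂ, ∃ δ : ℝ, 0 < δ ∧
        (p ∈ X → g p = 1 → ∀ u ∈ X, Complex.abs (u - p) < δ → g u = 1) := by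
      intro p
      by_cases hp : p ∈ X ∧ g p = 1
      · obtain ⟨δ, hδ, hδ2⟩ := hB p hp.1 hp.2
        exact ⟨δ, hδ, fun _ _ u hu hlt => hδ2 u hu hlt⟩
      · exact ⟨1, one_pos, fun h1 h2 => absurd ⟨h1, h2⟩ hp⟩
    choose δf hδf1 hδf2 using hall
    set U : Set ℂ := ⋃ p ∈ X ∩ g ⁻¹' {1}, Metric.ball p (δf p) with hU_def
    have hUopen : IsOpen U := isOpen_biUnion fun _ _ => Metric.isOpen_ball
    have hVopen : IsOpen (X ∩ g ⁻¹' {1})ᶜ := hEclosed.isOpen_compl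
    have hcover : X ⊆ U ∪ (X ∩ g ⁻¹' {1})ᶜ := by
      intro y hy
      by_cases hy1 : g y = 1
      · left
        exact Set.mem_biUnion ⟨hy, hy1⟩ (Metric.mem_ball_self (hδf1 y))
      · right
        exact fun h => hy1 h.2
    have hne1 : (X ∩ U).Nonempty := by
      refine ⟨z₀, hz₀X, ?_⟩
      exact Set.mem_biUnion ⟨hz₀X, hgz₀⟩ (Metric.mem_ball_self (hδf1 z₀))
    have hne2 : (X ∩ (X ∩ g ⁻¹' {1})ᶜ).Nonempty :=
      ⟨v, hv, fun h => hgv h.2⟩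
    obtain ⟨y, hyX, hyU, hyV⟩ := hconn.isPreconnected U _ hUopen hVopen hcover hne1 hne2
    obtain ⟨p, hp, hyp⟩ := Set.mem_iUnion₂.1 hyU
    have : g y = 1 := by
      apply hδf2 p hp.1 hp.2 y hyX
      rw [Metric.mem_ball, Complex.dist_eq] at hyp
      exact hyp
    exact hyV ⟨hyX, this⟩
  obtain ⟨z₁, hz₁X, hgz₁, hbd⟩ := hbdry
  -- main choice lemma
  have hmain : ∀ (j : ℕ) (S : ℝ), ∃ p : ℂ × ℕ,
      p.1 ∈ X ∧ g p.1 ≠ 1 ∧ Complex.abs (p.1 - z₁) ≤ 1/((j:ℝ)+1) ∧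
      ((j:ℝ)+1) * Complex.abs (p.1 - z₁) ≤ eps16 j / 8 ∧
      S * Complex.abs (1 - g p.1) ≤ eps16 j / 8 ∧
      (Complex.abs (g p.1))^p.2 ≤ 1/2 := by
    intro j S
    have hj1 : (0:ℝ) < (j:ℝ) + 1 := by positivity
    set η : ℝ := eps16 j / (8*(|S|+1)) with hη_def
    have hη : 0 < η := by
      have := eps16_pos j
      have : (0:ℝ) < 8*(|S|+1) := by positivity
      positivity
    obtain ⟨δ3, hδ3, hcont⟩ := Metric.continuousWithinAt_iff.1 (hgc z₁ hz₁X) η hη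
    set δ : ℝ := min (min (1/((j:ℝ)+1)) (eps16 j/(8*((j:ℝ)+1)))) δ3 with hδ_def
    have hδpos : 0 < δ := by
      have h1 : (0:ℝ) < 1/((j:ℝ)+1) := by positivity
      have h2 : (0:ℝ) < eps16 j/(8*((j:ℝ)+1)) := by have := eps16_pos j; positivity
      exact lt_min (lt_min h1 h2) hδ3
    obtain ⟨u, huX, hud, hu1⟩ := hbd δ hδpos
    obtain ⟨m, hm⟩ := exists_pow_lt_of_lt_one (show (0:ℝ) < 1/2 by norm_num)
      (hglt u huX hu1)
    have hd1 : Complex.abs (u - z₁) ≤ 1/((j:ℝ)+1) :=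
      le_trans hud.le (le_trans (min_le_left _ _) (min_le_left _ _))
    have hd2 : Complex.abs (u - z₁) ≤ eps16 j/(8*((j:ℝ)+1)) :=
      le_trans hud.le (le_trans (min_le_left _ _) (min_le_right _ _))
    have hd3 : Complex.abs (u - z₁) < δ3 := lt_of_lt_of_le hud (min_le_right _ _)
    have hgu : Complex.abs (1 - g u) < η := by
      have := hcont huX (by rwa [Complex.dist_eq])
      rw [Complex.dist_eq, hgz₁] at this
      rwa [Complex.abs.map_sub]
    refine ⟨(u, m), huX, hu1, hd1, ?_, ?_, hm.le⟩
    · calc ((j:ℝ)+1) * Complex.abs (u - z₁) ≤ ((j:ℝ)+1) * (eps16 j/(8*((j:ℝ)+1))) :=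
            mul_le_mul_of_nonneg_left hd2 hj1.le
        _ = eps16 j / 8 := by field_simp
    · have h1 : S * Complex.abs (1 - g u) ≤ |S| * Complex.abs (1 - g u) :=
        mul_le_mul_of_nonneg_right (le_abs_self S) (Complex.abs.nonneg _)
      have h2 : |S| * Complex.abs (1 - g u) ≤ |S| * η :=
        mul_le_mul_of_nonneg_left hgu.le (abs_nonneg S)
      have h3 : |S| * η ≤ eps16 j / 8 := by
        rw [hη_def, ← mul_div_assoc]
        rw [div_le_div_iff₀ (by positivity) (by norm_num : (0:ℝ) < 8)]
        have := abs_nonneg S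
        have := eps16_pos j
        nlinarith
      linarith
  -- recursive choice of points and exponents
  set pick : ℕ → ℝ → ℂ × ℕ := fun j S => (hmain j S).choose with hpick_def
  set w : ℕ → ℂ := fun j => (mkT16 pick j).2.1 with hw_def
  set nn : ℕ → ℕ := fun j => (mkT16 pick j).2.2 with hnn_def
  set Sj : ℕ → ℝ := fun j => (mkT16 pick j).1 with hSj_def
  have hspec : ∀ j, (w j) ∈ X ∧ g (w j) ≠ 1 ∧
      Complex.abs (w j - z₁) ≤ 1/((j:ℝ)+1) ∧
      ((j:ℝ)+1) * Complex.abs (w j - z₁) ≤ eps16 j/8 ∧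
      Sj j * Complex.abs (1 - g (w j)) ≤ eps16 j/8 ∧
      (Complex.abs (g (w j)))^(nn j) ≤ 1/2 := by
    intro j
    have h1 : (mkT16 pick j).2 = pick j (Sj j) := mkT16_snd pick j
    have h2 := (hmain j (Sj j)).choose_spec
    have hwj : w j = ((hmain j (Sj j)).choose).1 := by
      rw [hw_def]; simp only; rw [h1]
    have hnnj : nn j = ((hmain j (Sj j)).choose).2 := by
      rw [hnn_def]; simp only; rw [h1]
    rw [hwj, hnnj]
    exact h2
  have hSj_eq : ∀ j, Sj j = ∑ k ∈ Finset.range j, eps16 k * (nn k : ℝ) :=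
    fun j => mkT16_fst pick j
  -- the Cauchy sequence
  set Fs : ℕ → ℂ → ℂ := fun N y => ∑ k ∈ Finset.range N, ((eps16 k : ℝ) : ℂ) * (1 - g y ^ (nn k))
    with hFs_def
  have habs1 : ∀ y ∈ X, ∀ m : ℕ, Complex.abs (1 - g y ^ m) ≤ 2 := by
    intro y hy m
    have h1 : Complex.abs (g y ^ m) ≤ 1 := by
      rw [map_pow]; exact pow_le_one₀ (Complex.abs.nonneg _) (hgle y hy)
    have h2 := Complex.abs.sub_le 1 0 (g y ^ m)
    simp only [sub_zero, zero_sub, map_one, map_neg_eq_map] at h2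
    linarith
  have htermabs : ∀ k : ℕ, ∀ y ∈ X,
      Complex.abs (((eps16 k : ℝ) : ℂ) * (1 - g y ^ (nn k))) ≤ 2 * eps16 k := by
    intro k y hy
    rw [map_mul, Complex.abs_ofReal, abs_of_pos (eps16_pos k)]
    calc eps16 k * Complex.abs (1 - g y ^ nn k) ≤ eps16 k * 2 :=
          mul_le_mul_of_nonneg_left (habs1 y hy _) (eps16_pos k).le
      _ = 2 * eps16 k := by ring
  have hFsD : ∀ N, HasD1 X (Fs N) (fun _ => 0) := by
    intro N
    constructor
    · intro y hy
      have hterm : ∀ k ∈ Finset.range N,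
          HasDerivWithinAt (fun x => ((eps16 k : ℝ) : ℂ) * (1 - g x ^ (nn k))) 0 X y := by
        intro k _
        have h1 := (((hgd y hy).pow (nn k)).const_sub 1).const_mul ((eps16 k : ℝ) : ℂ)
        simpa using h1
      have h2 := HasDerivWithinAt.fun_sum hterm
      simpa [hFs_def] using h2
    · exact continuousOn_const
  have hFscont : ∀ N, ContinuousOn (Fs N) X := fun N y hy => ((hFsD N).1 y hy).continuousWithinAt
  -- Cauchy in D-norm
  have hUnif0 : UnifNorm X (fun _ : ℂ => (0:ℂ) - 0) = 0 := by
    unfold UnifNorm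
    have h1 : ((fun z : ℂ => ‖(fun _ : ℂ => (0:ℂ) - 0) z‖) '' X) = {0} := by
      rw [show (fun z : ℂ => ‖(fun _ : ℂ => (0:ℂ) - 0) z‖) = fun _ : ℂ => (0:ℝ) by funext; simp]
      exact hconn.nonempty.image_const 0
    rw [h1, csSup_singleton]
  have hcauchy : ∀ ε > (0:ℝ), ∃ N, ∀ m ≥ N, ∀ n ≥ N,
      DNorm X (fun z => Fs m z - Fs n z) (fun z => (fun (_:ℕ) (_:ℂ) => (0:ℂ)) m z - (fun (_:ℕ) (_:ℂ) => (0:ℂ)) n z) < ε := by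
    intro η hη
    obtain ⟨N₀, hN₀⟩ := exists_pow_lt_of_lt_one (show (0:ℝ) < η/8 by linarith)
      (show (1:ℝ)/2 < 1 by norm_num)
    refine ⟨N₀, ?_⟩
    have hkey : ∀ m n : ℕ, N₀ ≤ n → n ≤ m → ∀ y ∈ X,
        Complex.abs (Fs m y - Fs n y) ≤ 4 * eps16 N₀ := by
      intro m n hn hnm y hy
      have hsum : Fs m y - Fs n y =
          ∑ k ∈ Finset.Ico n m, ((eps16 k : ℝ) : ℂ) * (1 - g y ^ (nn k)) := by
        rw [hFs_def]
        simp only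
        rw [Finset.sum_Ico_eq_sub _ hnm]
      rw [hsum]
      calc Complex.abs (∑ k ∈ Finset.Ico n m, ((eps16 k : ℝ) : ℂ) * (1 - g y ^ (nn k)))
          ≤ ∑ k ∈ Finset.Ico n m, Complex.abs (((eps16 k : ℝ) : ℂ) * (1 - g y ^ (nn k))) :=
            Complex.abs.sum_le _ _
        _ ≤ ∑ k ∈ Finset.Ico n m, 2 * eps16 k :=
            Finset.sum_le_sum fun k _ => htermabs k y hy
        _ = 2 * ∑ k ∈ Finset.Ico n m, eps16 k := by rw [Finset.mul_sum]
        _ ≤ 2 * (2 * eps16 n) := by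
            have := eps16_tail n m; nlinarith [eps16_pos n]
        _ ≤ 4 * eps16 N₀ := by
            have := eps16_anti hn; linarith
    intro m hm n hn
    have hbnd : ∀ y ∈ X, Complex.abs (Fs m y - Fs n y) ≤ 4 * eps16 N₀ := by
      rcases le_total n m with h | h
      · exact hkey m n hn h
      · intro y hy
        rw [Complex.abs.map_sub]
        exact hkey n m hm h y hy
    have h1 : UnifNorm X (fun z => Fs m z - Fs n z) ≤ 4 * eps16 N₀ :=
      UnifNorm_le X _ (by nlinarith [eps16_pos N₀]) hbnd
    have h2 : (4:ℝ) * eps16 N₀ < η := by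
      have := eps16_le_pow N₀
      nlinarith
    unfold DNorm
    rw [hUnif0]
    linarith
  obtain ⟨f₀, g₀, hD0, htend⟩ := hcomp Fs (fun _ _ => 0) hFsD hcauchy
  have htend' : Filter.Tendsto (fun n => DNorm X (fun z => Fs n z - f₀ z)
      (fun z => (0:ℂ) - g₀ z)) Filter.atTop (nhds 0) := htend
  have hf₀cont : ContinuousOn f₀ X := fun y hy => (hD0.1 y hy).continuousWithinAt
  -- pointwise convergence
  have hpt : ∀ y ∈ X, Filter.Tendsto (fun N => Fs N y) Filter.atTop (nhds (f₀ y)) := by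
    intro y hy
    have hb : ∀ N, Complex.abs (Fs N y - f₀ y) ≤
        DNorm X (fun z => Fs N z - f₀ z) (fun z => (0:ℂ) - g₀ z) := by
      intro N
      have h1 : Complex.abs (Fs N y - f₀ y) ≤ UnifNorm X (fun z => Fs N z - f₀ z) :=
        le_UnifNorm hXc ((hFscont N).sub hf₀cont) hy
      have h2 := UnifNorm_nonneg X (fun z => (0:ℂ) - g₀ z)
      unfold DNorm
      linarith
    have h0 : Filter.Tendsto (fun N => Complex.abs (Fs N y - f₀ y)) Filter.atTop (nhds 0) :=
      squeeze_zero (fun N => Complex.abs.nonneg _) hb htend'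
    have h3 : Filter.Tendsto (fun N => Fs N y - f₀ y) Filter.atTop (nhds 0) :=
      tendsto_zero_iff_norm_tendsto_zero.2 (by simpa [Complex.norm_eq_abs] using h0)
    have h4 := h3.add_const (f₀ y)
    simpa using h4
  have hz₁0 : f₀ z₁ = 0 := by
    have h1 : ∀ N, Fs N z₁ = 0 := by
      intro N
      rw [hFs_def]
      simp [hgz₁]
    have h2 := hpt z₁ hz₁X
    rw [show (fun N => Fs N z₁) = fun _ : ℕ => (0:ℂ) from funext h1] at h2
    exact (tendsto_nhds_unique tendsto_const_nhds h2).symm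
  -- lower bound for |f₀ (w j)|
  have hlow : ∀ j, eps16 j / 4 ≤ Complex.abs (f₀ (w j)) := by
    intro j
    have hwX := (hspec j).1
    have habsf : Filter.Tendsto (fun N => Complex.abs (Fs N (w j))) Filter.atTop
        (nhds (Complex.abs (f₀ (w j)))) :=
      (Complex.continuous_abs.tendsto _).comp (hpt (w j) hwX)
    apply ge_of_tendsto habsf
    filter_upwards [Filter.eventually_ge_atTop (j+1)] with N hN
    -- finite-stage estimate
    set t : ℂ := g (w j) with ht_def
    set cc : ℕ → ℂ := fun k => ((eps16 k : ℝ) : ℂ) * (1 - t ^ (nn k)) with hcc_def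
    set A : ℂ := Fs N (w j) with hA_def
    set B : ℂ := ∑ k ∈ Finset.range j, cc k with hB_def
    set C : ℂ := ∑ k ∈ Finset.Ico (j+1) N, cc k with hC_def
    have hsplit : A = B + cc j + C := by
      have h1 : C = ∑ k ∈ Finset.range N, cc k - ∑ k ∈ Finset.range (j+1), cc k := by
        rw [hC_def]; exact Finset.sum_Ico_eq_sub _ hN
      have h2 : A = ∑ k ∈ Finset.range N, cc k := by rw [hA_def, hFs_def]
      rw [h2, h1, Finset.sum_range_succ, hB_def]
      ring
    have ht1 : Complex.abs t ≤ 1 := hgle _ hwX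
    have hcj : eps16 j * (1/2) ≤ Complex.abs (cc j) := by
      rw [hcc_def]
      simp only
      rw [map_mul, Complex.abs_ofReal, abs_of_pos (eps16_pos j)]
      have := one_sub_pow_abs_ge (hspec j).2.2.2.2.2
      nlinarith [eps16_pos j]
    have hrange : Complex.abs B ≤ eps16 j / 8 := by
      rw [hB_def]
      calc Complex.abs (∑ k ∈ Finset.range j, cc k)
          ≤ ∑ k ∈ Finset.range j, Complex.abs (cc k) := Complex.abs.sum_le _ _
        _ ≤ ∑ k ∈ Finset.range j, eps16 k * (nn k : ℝ) * Complex.abs (1 - t) := by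
            apply Finset.sum_le_sum
            intro k _
            rw [hcc_def]
            simp only
            rw [map_mul, Complex.abs_ofReal, abs_of_pos (eps16_pos k)]
            have h3 := one_sub_pow_abs_le ht1 (nn k)
            calc eps16 k * Complex.abs (1 - t ^ nn k)
                ≤ eps16 k * ((nn k : ℝ) * Complex.abs (1 - t)) :=
                  mul_le_mul_of_nonneg_left h3 (eps16_pos k).le
              _ = eps16 k * (nn k : ℝ) * Complex.abs (1 - t) := by ring
        _ = (∑ k ∈ Finset.range j, eps16 k * (nn k : ℝ)) * Complex.abs (1 - t) := by
            rw [Finset.sum_mul]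
        _ = Sj j * Complex.abs (1 - t) := by rw [hSj_eq]
        _ ≤ eps16 j / 8 := (hspec j).2.2.2.2.1
    have hico : Complex.abs C ≤ eps16 j / 16 := by
      rw [hC_def]
      calc Complex.abs (∑ k ∈ Finset.Ico (j+1) N, cc k)
          ≤ ∑ k ∈ Finset.Ico (j+1) N, Complex.abs (cc k) := Complex.abs.sum_le _ _
        _ ≤ ∑ k ∈ Finset.Ico (j+1) N, 2 * eps16 k :=
            Finset.sum_le_sum fun k _ => htermabs k (w j) hwX
        _ = 2 * ∑ k ∈ Finset.Ico (j+1) N, eps16 k := by rw [Finset.mul_sum]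
        _ ≤ 2 * (2 * eps16 (j+1)) := by
            have := eps16_tail (j+1) N; nlinarith [eps16_pos (j+1)]
        _ ≤ eps16 j / 16 := by
            have := eps16_succ_le j; linarith
    have htri : Complex.abs (cc j) ≤ Complex.abs A + Complex.abs B + Complex.abs C := by
      have h2 : cc j = A - B - C := by rw [hsplit]; ring
      rw [h2]
      have t1 : Complex.abs (A - B - C) ≤ Complex.abs (A - B) + Complex.abs C := by
        have := Complex.abs.sub_le (A - B) 0 C
        simp only [sub_zero, zero_sub, map_neg_eq_map] at this
        exact this
      have t2 : Complex.abs (A - B) ≤ Complex.abs A + Complex.abs B := by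
        have := Complex.abs.sub_le A 0 B
        simp only [sub_zero, zero_sub, map_neg_eq_map] at this
        exact this
      linarith
    have hpos := eps16_pos j
    linarith
  -- conclusion: contradiction with differentiability of f₀ at z₁
  have hwne : ∀ j, w j ≠ z₁ := by
    intro j h
    exact (hspec j).2.1 (by rw [h, hgz₁])
  have htendw : Filter.Tendsto w Filter.atTop (nhds z₁) := by
    rw [tendsto_iff_dist_tendsto_zero]
    simp only [Complex.dist_eq]
    exact squeeze_zero (fun j => Complex.abs.nonneg _)
      (fun j => (hspec j).2.2.1) tendsto_one_div_add_atTop_nhds_zero_nat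
  have htendw' : Filter.Tendsto w Filter.atTop (nhdsWithin z₁ (X \ {z₁})) :=
    tendsto_nhdsWithin_of_tendsto_nhds_of_eventually_within w htendw
      (Filter.Eventually.of_forall fun j => ⟨(hspec j).1, by simp [hwne j]⟩)
  have hslope := hasDerivWithinAt_iff_tendsto_slope.1 (hD0.1 z₁ hz₁X)
  have habs : Filter.Tendsto (fun j => Complex.abs (slope f₀ z₁ (w j))) Filter.atTop
      (nhds (Complex.abs (g₀ z₁))) :=
    (Complex.continuous_abs.tendsto _).comp (hslope.comp htendw')
  have hlow2 : ∀ j : ℕ, 2*((j:ℝ)+1) ≤ Complex.abs (slope f₀ z₁ (w j)) := by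
    intro j
    have hd : 0 < Complex.abs (w j - z₁) := by
      rw [AbsoluteValue.pos_iff]
      exact sub_ne_zero.2 (hwne j)
    have hsl : Complex.abs (slope f₀ z₁ (w j)) =
        Complex.abs (f₀ (w j) - f₀ z₁) / Complex.abs (w j - z₁) := by
      simp [slope, div_eq_inv_mul]
    rw [hsl, hz₁0, sub_zero, le_div_iff₀ hd]
    have h1 := (hspec j).2.2.2.1
    have h2 := hlow j
    nlinarith
  have hev1 := habs.eventually (gt_mem_nhds (lt_add_one (Complex.abs (g₀ z₁))))
  have hev2 : ∀ᶠ j : ℕ in Filter.atTop, Complex.abs (g₀ z₁) + 1 < 2*((j:ℝ)+1) := by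
    filter_upwards [Filter.eventually_gt_atTop ⌈Complex.abs (g₀ z₁)⌉₊] with j hj
    have h1 : Complex.abs (g₀ z₁) ≤ (⌈Complex.abs (g₀ z₁)⌉₊ : ℝ) := Nat.le_ceil _
    have h2 : ((⌈Complex.abs (g₀ z₁)⌉₊ : ℕ) : ℝ) < (j:ℝ) := by exact_mod_cast hj
    have h3 : (0:ℝ) ≤ (j:ℝ) := Nat.cast_nonneg j
    linarith
  obtain ⟨j, hj1, hj2⟩ := (hev1.and hev2).exists
  have := hlow2 j
  linarith
end

section
/- Let X be a connected compact plane set for which D¹(X) is complete, and let z₀ ∈ X. Then there exists C₁ > 0 such that |f|_X ≤ C₁|f'|_X for all f ∈ D¹(X) with f(z₀) = 0; consequently there exists C₂ > 0 such that |f(z₀) − f(w)| ≤ C₂|f'|_X·|z₀ − w| for all f ∈ D¹(X) and all w ∈ X. -/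
open Complex Set

set_option linter.unusedSectionVars false
set_option maxHeartbeats 1000000
set_option synthInstance.maxHeartbeats 200000

namespace Stmt17Aux

open Filter Topology

variable {X : Set ℂ}

lemma hasD1_contOn {f f' : ℂ → ℂ} (h : HasD1 X f f') : ContinuousOn f X :=
  fun z hz => (h.1 z hz).continuousWithinAt

lemma unifNorm_nonneg (X : Set ℂ) (f : ℂ → ℂ) : 0 ≤ UnifNorm X f :=
  Real.sSup_nonneg (by rintro x ⟨z, hz, rfl⟩; exact norm_nonneg _)

lemma unifNorm_le {f : ℂ → ℂ} {C : ℝ} (h : ∀ z ∈ X, ‖f z‖ ≤ C) (hC : 0 ≤ C) :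
    UnifNorm X f ≤ C :=
  Real.sSup_le (by rintro x ⟨z, hz, rfl⟩; exact h z hz) hC

lemma le_unifNorm (hXc : IsCompact X) {f : ℂ → ℂ} (hf : ContinuousOn f X) {z : ℂ} (hz : z ∈ X) :
    ‖f z‖ ≤ UnifNorm X f := by
  apply le_csSup
  · exact (hXc.image_of_continuousOn (continuous_norm.comp_continuousOn hf)).bddAbove
  · exact ⟨z, hz, rfl⟩

lemma unifNorm_congr {f g : ℂ → ℂ} (h : EqOn f g X) : UnifNorm X f = UnifNorm X g := by
  unfold UnifNorm
  rw [Set.image_congr (fun a ha => by rw [h ha])]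

lemma unifNorm_mul_le (hXc : IsCompact X) {f : ℂ → ℂ} (hf : ContinuousOn f X) (a : ℂ) :
    UnifNorm X (fun z => a * f z) ≤ ‖a‖ * UnifNorm X f := by
  refine unifNorm_le (fun z hz => ?_) (mul_nonneg (norm_nonneg _) (unifNorm_nonneg X f))
  rw [norm_mul]
  exact mul_le_mul_of_nonneg_left (le_unifNorm hXc hf hz) (norm_nonneg _)

lemma unifNorm_smul (hXc : IsCompact X) {f : ℂ → ℂ} (hf : ContinuousOn f X) (a : ℂ) :
    UnifNorm X (fun z => a * f z) = ‖a‖ * UnifNorm X f := by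
  rcases eq_or_ne a 0 with rfl | ha
  · simp only [zero_mul, norm_zero]
    refine le_antisymm (unifNorm_le (fun z hz => by simp) le_rfl) (unifNorm_nonneg _ _)
  · refine le_antisymm (unifNorm_mul_le hXc hf a) ?_
    have h2 := unifNorm_mul_le hXc (f := fun z => a * f z) (continuousOn_const.mul hf) a⁻¹
    have h3 : UnifNorm X (fun z => a⁻¹ * (a * f z)) = UnifNorm X f :=
      unifNorm_congr (fun z _ => by field_simp)
    rw [h3, norm_inv] at h2
    have ha' : 0 < ‖a‖ := norm_pos_iff.mpr ha
    calc ‖a‖ * UnifNorm X f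
        ≤ ‖a‖ * (‖a‖⁻¹ * UnifNorm X (fun z => a * f z)) :=
          mul_le_mul_of_nonneg_left h2 ha'.le
      _ = UnifNorm X (fun z => a * f z) := by field_simp

open scoped Classical in
noncomputable def extX (F : C(X, ℂ)) : ℂ → ℂ := fun z => if h : z ∈ X then F ⟨z, h⟩ else 0

lemma extX_apply (F : C(X, ℂ)) {z : ℂ} (hz : z ∈ X) : extX F z = F ⟨z, hz⟩ := by
  unfold extX; exact dif_pos hz

lemma continuousOn_extX (F : C(X, ℂ)) : ContinuousOn (extX F) X := by
  rw [continuousOn_iff_continuous_restrict]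
  have : X.domRestrict (extX F) = ⇑F := funext fun x => by
    rw [Set.restrict_apply, extX_apply F x.2]
  rw [this]; exact F.continuous

def restr {f : ℂ → ℂ} (hf : ContinuousOn f X) : C(X, ℂ) :=
  ⟨X.restrict f, continuousOn_iff_continuous_restrict.mp hf⟩

lemma restr_apply {f : ℂ → ℂ} (hf : ContinuousOn f X) (x : X) : restr hf x = f x := rfl

section Compact

variable [CompactSpace X]

lemma norm_restr {f : ℂ → ℂ} (hf : ContinuousOn f X) : ‖restr hf‖ = UnifNorm X f := by
  have hXc : IsCompact X := isCompact_iff_compactSpace.mpr ‹_›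
  apply le_antisymm
  · rw [ContinuousMap.norm_le _ (unifNorm_nonneg X f)]
    intro x
    rw [restr_apply]
    exact le_unifNorm hXc hf x.2
  · refine unifNorm_le (fun z hz => ?_) (norm_nonneg _)
    rw [← restr_apply hf ⟨z, hz⟩]
    exact ContinuousMap.norm_coe_le_norm _ _

noncomputable def SS (X : Set ℂ) : Submodule ℂ (C(X, ℂ) × C(X, ℂ)) where
  carrier := {u | ∀ z, ∀ hz : z ∈ X, HasDerivWithinAt (extX u.1) (u.2 ⟨z, hz⟩) X z}
  add_mem' := by
    intro a b ha hb z hz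
    refine ((ha z hz).add (hb z hz)).congr (fun w hw => ?_) ?_
    · simp [extX_apply _ hw]
    · simp [extX_apply _ hz]
  zero_mem' := by
    intro z hz
    have h0 : extX (0 : C(X, ℂ)) = fun _ => (0 : ℂ) := funext fun w => by
      unfold extX; split <;> simp
    simpa [h0] using hasDerivWithinAt_const z X (0 : ℂ)
  smul_mem' := by
    intro c u hu z hz
    refine ((hu z hz).const_mul c).congr (fun w hw => ?_) ?_
    · simp [extX_apply _ hw]
    · simp [extX_apply _ hz]

lemma mem_SS {f f' : ℂ → ℂ} (h : HasD1 X f f') :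
    (restr (hasD1_contOn h), restr h.2) ∈ SS X := by
  intro z hz
  refine (h.1 z hz).congr (fun w hw => ?_) ?_
  · rw [extX_apply _ hw, restr_apply]
  · rw [extX_apply _ hz, restr_apply]

lemma isClosed_SS (hcomp : D1Complete X) : IsClosed ((SS X : Set (C(X, ℂ) × C(X, ℂ)))) := by
  have hXc : IsCompact X := isCompact_iff_compactSpace.mpr ‹_›
  refine IsSeqClosed.isClosed ?_
  intro u p hu hup
  set f : ℕ → ℂ → ℂ := fun n => extX (u n).1 with hf
  set g : ℕ → ℂ → ℂ := fun n => extX (u n).2 with hg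
  have hD1 : ∀ n, HasD1 X (f n) (g n) := by
    intro n
    refine ⟨fun z hz => ?_, continuousOn_extX _⟩
    have := hu n z hz
    rwa [← extX_apply ((u n).2) hz] at this
  have hfc : ∀ n, ContinuousOn (f n) X := fun n => continuousOn_extX _
  have hgc : ∀ n, ContinuousOn (g n) X := fun n => continuousOn_extX _
  have hcauchy : ∀ ε > (0:ℝ), ∃ N, ∀ m ≥ N, ∀ n ≥ N,
      DNorm X (fun z => f m z - f n z) (fun z => g m z - g n z) < ε := by
    intro ε hε
    have hc : CauchySeq u := hup.cauchySeq
    rw [Metric.cauchySeq_iff] at hc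
    obtain ⟨N, hN⟩ := hc (ε / 3) (by positivity)
    refine ⟨N, fun m hm n hn => ?_⟩
    have hb1 : UnifNorm X (fun z => f m z - f n z) ≤ ‖u m - u n‖ := by
      refine unifNorm_le (fun z hz => ?_) (norm_nonneg _)
      have : f m z - f n z = ((u m - u n).1) ⟨z, hz⟩ := by
        simp [hf, extX_apply _ hz]
      rw [this]
      exact le_trans (ContinuousMap.norm_coe_le_norm _ _) (norm_fst_le _)
    have hb2 : UnifNorm X (fun z => g m z - g n z) ≤ ‖u m - u n‖ := by
      refine unifNorm_le (fun z hz => ?_) (norm_nonneg _)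
      have : g m z - g n z = ((u m - u n).2) ⟨z, hz⟩ := by
        simp [hg, extX_apply _ hz]
      rw [this]
      exact le_trans (ContinuousMap.norm_coe_le_norm _ _) (norm_snd_le _)
    have hd : dist (u m) (u n) < ε / 3 := hN m hm n hn
    rw [dist_eq_norm] at hd
    have : DNorm X (fun z => f m z - f n z) (fun z => g m z - g n z) ≤ 2 * ‖u m - u n‖ := by
      rw [DNorm]; linarith
    linarith
  obtain ⟨f₀, g₀, hD₀, hlim⟩ := hcomp f g hD1 hcauchy
  have hf₀c : ContinuousOn f₀ X := hasD1_contOn hD₀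
  have hg₀c : ContinuousOn g₀ X := hD₀.2
  have hUf : Tendsto (fun n => UnifNorm X (fun z => f n z - f₀ z)) atTop (𝓝 0) := by
    refine squeeze_zero (fun n => unifNorm_nonneg _ _) (fun n => ?_) hlim
    exact le_add_of_nonneg_right (unifNorm_nonneg _ _)
  have hUg : Tendsto (fun n => UnifNorm X (fun z => g n z - g₀ z)) atTop (𝓝 0) := by
    refine squeeze_zero (fun n => unifNorm_nonneg _ _) (fun n => ?_) hlim
    exact le_add_of_nonneg_left (unifNorm_nonneg _ _)
  have hp1 : ∀ x : X, p.1 x = f₀ x := by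
    intro x
    have hcont : Continuous (fun q : C(X, ℂ) × C(X, ℂ) => q.1 x) :=
      (continuous_eval_const x).comp continuous_fst
    have t1 : Tendsto (fun n => (u n).1 x) atTop (𝓝 (p.1 x)) := (hcont.tendsto p).comp hup
    have hbound : ∀ n, ‖(u n).1 x - f₀ x‖ ≤ UnifNorm X (fun z => f n z - f₀ z) := by
      intro n
      have h1 : (u n).1 x = f n (x : ℂ) := by simp [hf, extX_apply _ x.2]
      rw [h1]
      exact le_unifNorm hXc ((hfc n).sub hf₀c) x.2
    have t0 : Tendsto (fun n => (u n).1 x - f₀ x) atTop (𝓝 0) := squeeze_zero_norm hbound hUf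
    have t2 : Tendsto (fun n => (u n).1 x) atTop (𝓝 (f₀ x)) := by
      simpa using t0.add_const (f₀ (x : ℂ))
    exact tendsto_nhds_unique t1 t2
  have hp2 : ∀ x : X, p.2 x = g₀ x := by
    intro x
    have hcont : Continuous (fun q : C(X, ℂ) × C(X, ℂ) => q.2 x) :=
      (continuous_eval_const x).comp continuous_snd
    have t1 : Tendsto (fun n => (u n).2 x) atTop (𝓝 (p.2 x)) := (hcont.tendsto p).comp hup
    have hbound : ∀ n, ‖(u n).2 x - g₀ x‖ ≤ UnifNorm X (fun z => g n z - g₀ z) := by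
      intro n
      have h1 : (u n).2 x = g n (x : ℂ) := by simp [hg, extX_apply _ x.2]
      rw [h1]
      exact le_unifNorm hXc ((hgc n).sub hg₀c) x.2
    have t0 : Tendsto (fun n => (u n).2 x - g₀ x) atTop (𝓝 0) := squeeze_zero_norm hbound hUg
    have t2 : Tendsto (fun n => (u n).2 x) atTop (𝓝 (g₀ x)) := by
      simpa using t0.add_const (g₀ (x : ℂ))
    exact tendsto_nhds_unique t1 t2
  intro z hz
  rw [show p.2 ⟨z, hz⟩ = g₀ z from hp2 ⟨z, hz⟩]
  refine (hD₀.1 z hz).congr (fun w hw => ?_) ?_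
  · rw [extX_apply _ hw, hp1 ⟨w, hw⟩]
  · rw [extX_apply _ hz, hp1 ⟨z, hz⟩]

lemma step1 (hSclosed : IsClosed ((SS X : Set (C(X, ℂ) × C(X, ℂ))))) (z : X) :
    ∃ A : ℝ, 1 ≤ A ∧ ∀ F G : C(X, ℂ), (F, G) ∈ SS X → ∀ w : X,
      ‖F z - F w‖ ≤ A * (‖F‖ + ‖G‖) * ‖(z : ℂ) - (w : ℂ)‖ := by
  haveI : CompleteSpace (SS X) := hSclosed.completeSpace_coe
  set φ : X → (SS X) →L[ℂ] ℂ := fun w =>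
    ((z : ℂ) - (w : ℂ))⁻¹ • (((ContinuousMap.evalCLM ℂ z - ContinuousMap.evalCLM ℂ w) : C(X, ℂ) →L[ℂ] ℂ).comp
      ((ContinuousLinearMap.fst ℂ C(X, ℂ) C(X, ℂ)).comp (SS X).subtypeL)) with hφdef
  have hφ : ∀ (F G : C(X, ℂ)) (hu : (F, G) ∈ SS X) (w : X),
      φ w ⟨(F, G), hu⟩ = ((z : ℂ) - (w : ℂ))⁻¹ * (F z - F w) := by
    intro F G hu w
    have hev : ∀ (H : C(X, ℂ)) (x : X), ContinuousMap.evalCLM (M := ℂ) ℂ x H = H x :=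
      fun H x => rfl
    simp [hφdef, smul_eq_mul, hev]
  have hpt : ∀ u : SS X, ∃ C, ∀ w, ‖φ w u‖ ≤ C := by
    rintro ⟨⟨F, G⟩, hu⟩
    have hd : HasDerivWithinAt (extX F) (G z) X (z : ℂ) := by
      have := hu (z : ℂ) z.2
      simpa using this
    rw [hasDerivWithinAt_iff_tendsto_slope] at hd
    have hev : ∀ᶠ w in 𝓝[X \ {(z : ℂ)}] (z : ℂ), ‖slope (extX F) (z : ℂ) w‖ < ‖G z‖ + 1 :=
      hd.norm.eventually_lt_const (lt_add_one _)
    obtain ⟨δ, hδ, hball⟩ := Metric.mem_nhdsWithin_iff.mp hev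
    refine ⟨max (‖G z‖ + 1) (2 * ‖F‖ / δ), fun w => ?_⟩
    rcases eq_or_ne (w : ℂ) (z : ℂ) with hw | hw
    · have hz0 : ((z : ℂ) - (w : ℂ)) = 0 := by rw [hw, sub_self]
      have : φ w ⟨(F, G), hu⟩ = 0 := by rw [hφ, hz0]; simp
      rw [this, norm_zero]
      have : (0:ℝ) ≤ ‖G z‖ + 1 := by positivity
      exact le_trans this (le_max_left _ _)
    · have hsl : ‖φ w ⟨(F, G), hu⟩‖ = ‖slope (extX F) (z : ℂ) (w : ℂ)‖ := by
        rw [hφ, norm_mul, norm_inv, slope_def_field, extX_apply F w.2, extX_apply F z.2,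
          Subtype.coe_eta, Subtype.coe_eta, norm_div, norm_sub_rev ((z : ℂ)) ((w : ℂ)),
          norm_sub_rev (F z) (F w), div_eq_inv_mul]
      rcases lt_or_ge (dist (w : ℂ) (z : ℂ)) δ with hlt | hge
      · have hmem : (w : ℂ) ∈ Metric.ball (z : ℂ) δ ∩ (X \ {(z : ℂ)}) :=
          ⟨by rwa [Metric.mem_ball], w.2, hw⟩
        have := hball hmem
        rw [hsl]
        exact le_trans (le_of_lt this) (le_max_left _ _)
      · have h1 : ‖φ w ⟨(F, G), hu⟩‖ = ‖(z : ℂ) - (w : ℂ)‖⁻¹ * ‖F z - F w‖ := by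
          rw [hφ, norm_mul, norm_inv]
        have h2 : ‖F z - F w‖ ≤ 2 * ‖F‖ := by
          calc ‖F z - F w‖ ≤ ‖F z‖ + ‖F w‖ := norm_sub_le _ _
            _ ≤ ‖F‖ + ‖F‖ := add_le_add (ContinuousMap.norm_coe_le_norm _ _)
                (ContinuousMap.norm_coe_le_norm _ _)
            _ = 2 * ‖F‖ := by ring
        have h3 : ‖(z : ℂ) - (w : ℂ)‖⁻¹ ≤ δ⁻¹ := by
          apply inv_anti₀ hδ
          rw [Complex.dist_eq] at hge
          rwa [norm_sub_rev] at hge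
        rw [h1]
        calc ‖(z : ℂ) - (w : ℂ)‖⁻¹ * ‖F z - F w‖ ≤ δ⁻¹ * (2 * ‖F‖) :=
            mul_le_mul h3 h2 (norm_nonneg _) (by positivity)
          _ = 2 * ‖F‖ / δ := by field_simp
          _ ≤ max (‖G z‖ + 1) (2 * ‖F‖ / δ) := le_max_right _ _
  obtain ⟨C', hC'⟩ := banach_steinhaus hpt
  refine ⟨max C' 1, le_max_right _ _, ?_⟩
  intro F G hFG w
  set u : SS X := ⟨(F, G), hFG⟩ with hu
  have h1 : ‖φ w u‖ ≤ C' * ‖u‖ :=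
    le_trans ((φ w).le_opNorm u) (mul_le_mul_of_nonneg_right (hC' w) (norm_nonneg u))
  have hnu : ‖u‖ ≤ ‖F‖ + ‖G‖ := by
    have hun : ‖u‖ = max ‖F‖ ‖G‖ := rfl
    rw [hun]
    exact max_le (le_add_of_nonneg_right (norm_nonneg _)) (le_add_of_nonneg_left (norm_nonneg _))
  rcases eq_or_ne (w : ℂ) (z : ℂ) with hw | hw
  · have hweq : w = z := Subtype.ext hw
    subst hweq
    simp
  · have hzw : ((z : ℂ) - (w : ℂ)) ≠ 0 := sub_ne_zero.mpr (Ne.symm hw)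
    have hnz : ‖(z : ℂ) - (w : ℂ)‖ ≠ 0 := norm_ne_zero_iff.mpr hzw
    have heq : ‖φ w u‖ = ‖(z : ℂ) - (w : ℂ)‖⁻¹ * ‖F z - F w‖ := by
      rw [hu, hφ, norm_mul, norm_inv]
    have key : ‖F z - F w‖ = ‖(z : ℂ) - (w : ℂ)‖ * ‖φ w u‖ := by
      rw [heq]
      have hb : ‖(z : ℂ) - (w : ℂ)‖ ≠ 0 := hnz
      rw [inv_mul_eq_div, mul_div_assoc']
      exact (mul_div_cancel_left₀ _ hb).symm
    rw [key]
    calc ‖(z : ℂ) - (w : ℂ)‖ * ‖φ w u‖ ≤ ‖(z : ℂ) - (w : ℂ)‖ * (C' * ‖u‖) :=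
        mul_le_mul_of_nonneg_left h1 (norm_nonneg _)
      _ ≤ ‖(z : ℂ) - (w : ℂ)‖ * (max C' 1 * (‖F‖ + ‖G‖)) := by
          refine mul_le_mul_of_nonneg_left ?_ (norm_nonneg _)
          refine mul_le_mul (le_max_left _ _) hnu (norm_nonneg _) ?_
          exact le_trans zero_le_one (le_max_right _ _)
      _ = max C' 1 * (‖F‖ + ‖G‖) * ‖(z : ℂ) - (w : ℂ)‖ := by
          ring

lemma pow_mem {F : C(X, ℂ)} (h : (F, (0 : C(X, ℂ))) ∈ SS X) (n : ℕ) :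
    (F ^ n, (0 : C(X, ℂ))) ∈ SS X := by
  intro z hz
  have hd : HasDerivWithinAt (extX F) 0 X z := by simpa using h z hz
  have hp := hd.pow n
  rw [mul_zero] at hp
  refine HasDerivWithinAt.congr (f := fun x => extX F x ^ n) hp
    (fun w hw => ?_) ?_
  · rw [extX_apply _ hw]; simp [extX_apply F hw]
  · rw [extX_apply _ hz]; simp [extX_apply F hz]

lemma modulus_const [Nonempty X] [ConnectedSpace X]
    (hstep1 : ∀ z : X, ∃ A : ℝ, 1 ≤ A ∧ ∀ F G : C(X, ℂ), (F, G) ∈ SS X → ∀ w : X,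
      ‖F z - F w‖ ≤ A * (‖F‖ + ‖G‖) * ‖(z : ℂ) - (w : ℂ)‖)
    {F : C(X, ℂ)} (hF : (F, (0 : C(X, ℂ))) ∈ SS X) : ∀ x : X, ‖F x‖ = ‖F‖ := by
  rcases eq_or_lt_of_le (norm_nonneg F) with hM | hMpos
  · intro x
    rw [← hM]
    refine le_antisymm ?_ (norm_nonneg _)
    rw [hM]
    exact F.norm_coe_le_norm x
  set Y : Set X := {x | ‖F x‖ = ‖F‖} with hY
  have hclosed : IsClosed Y := isClosed_eq F.continuous.norm continuous_const
  have hopen : IsOpen Y := by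
    rw [Metric.isOpen_iff]
    intro x hx
    obtain ⟨A, hA1, hA⟩ := hstep1 x
    have hA0 : (0:ℝ) < A := lt_of_lt_of_le one_pos hA1
    refine ⟨1 / (2 * A), by positivity, fun v hv => ?_⟩
    have hd : A * ‖(x : ℂ) - (v : ℂ)‖ < 1 / 2 := by
      have h1 : ‖(x : ℂ) - (v : ℂ)‖ < 1 / (2 * A) := by
        rw [Metric.mem_ball, Subtype.dist_eq, Complex.dist_eq] at hv
        rwa [norm_sub_rev]
      calc A * ‖(x : ℂ) - (v : ℂ)‖ < A * (1 / (2 * A)) :=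
          mul_lt_mul_of_pos_left h1 hA0
        _ = 1 / 2 := by field_simp; try ring
    have key : ∀ n : ℕ, ‖F‖ ^ (n + 1) ≤ ‖F v‖ ^ (n + 1)
        + A * ‖F‖ ^ (n + 1) * ‖(x : ℂ) - (v : ℂ)‖ := by
      intro n
      have h1 := hA (F ^ (n + 1)) 0 (pow_mem hF (n + 1)) v
      rw [norm_zero, add_zero] at h1
      have hFn : ‖F ^ (n + 1)‖ ≤ ‖F‖ ^ (n + 1) := by
        rw [ContinuousMap.norm_le _ (by positivity)]
        intro y
        rw [ContinuousMap.pow_apply, norm_pow]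
        exact pow_le_pow_left₀ (norm_nonneg _) (F.norm_coe_le_norm y) _
      have hx' : ‖(F ^ (n + 1)) x‖ = ‖F‖ ^ (n + 1) := by
        rw [ContinuousMap.pow_apply, norm_pow, hx]
      have h2 : ‖(F ^ (n + 1)) x‖ - ‖(F ^ (n + 1)) v‖ ≤ ‖(F ^ (n + 1)) x - (F ^ (n + 1)) v‖ := by
        exact norm_sub_norm_le _ _
      have h3 : ‖(F ^ (n + 1)) v‖ ≤ ‖F v‖ ^ (n + 1) := by
        rw [ContinuousMap.pow_apply, norm_pow]
      have h4 : A * ‖F ^ (n + 1)‖ * ‖(x : ℂ) - (v : ℂ)‖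
          ≤ A * ‖F‖ ^ (n + 1) * ‖(x : ℂ) - (v : ℂ)‖ := by
        have := mul_le_mul_of_nonneg_left hFn hA0.le
        exact mul_le_mul_of_nonneg_right this (norm_nonneg _)
      nlinarith [h1, h2, h3, h4, hx']
    by_contra hne
    have hlt : ‖F v‖ < ‖F‖ := lt_of_le_of_ne (F.norm_coe_le_norm v) hne
    set r : ℝ := ‖F v‖ / ‖F‖ with hr
    have hr1 : r < 1 := (div_lt_one hMpos).mpr hlt
    have hr0 : 0 ≤ r := by positivity
    have hhalf : ∀ n : ℕ, (1:ℝ) / 2 ≤ r ^ (n + 1) := by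
      intro n
      have hMn : (0:ℝ) < ‖F‖ ^ (n + 1) := by positivity
      rw [hr, div_pow, le_div_iff₀ hMn]
      nlinarith [key n, hd, hMn]
    have htend := tendsto_pow_atTop_nhds_zero_of_lt_one hr0 hr1
    have hev := htend.eventually_lt_const (show (0:ℝ) < 1/2 by norm_num)
    obtain ⟨n, hn, hn1⟩ := (hev.and (eventually_ge_atTop 1)).exists
    have := hhalf (n - 1)
    rw [Nat.sub_add_cancel hn1] at this
    linarith
  have hne : Y.Nonempty := by
    obtain ⟨x, -, hx⟩ := isCompact_univ.exists_isMaxOn univ_nonempty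
      (F.continuous.norm.continuousOn (s := univ))
    refine ⟨x, le_antisymm (F.norm_coe_le_norm x) ?_⟩
    rw [ContinuousMap.norm_le _ (norm_nonneg _)]
    exact fun y => hx (mem_univ y)
  have : Y = univ := IsClopen.eq_univ (s := Y) ⟨hclosed, hopen⟩ hne
  intro x
  have : x ∈ Y := this ▸ mem_univ x
  exact this

lemma const_of_deriv_zero [Nonempty X] [ConnectedSpace X]
    (hstep1 : ∀ z : X, ∃ A : ℝ, 1 ≤ A ∧ ∀ F G : C(X, ℂ), (F, G) ∈ SS X → ∀ w : X,
      ‖F z - F w‖ ≤ A * (‖F‖ + ‖G‖) * ‖(z : ℂ) - (w : ℂ)‖)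
    {F : C(X, ℂ)} (hF : (F, (0 : C(X, ℂ))) ∈ SS X) : ∀ x y : X, F x = F y := by
  intro x y
  have hsub : (F - ContinuousMap.const X (F y), (0 : C(X, ℂ))) ∈ SS X := by
    intro z hz
    have hd : HasDerivWithinAt (extX F) 0 X z := by simpa using hF z hz
    refine HasDerivWithinAt.congr (f := fun u => extX F u - F y) (by simpa using hd.sub_const (F y))
      (fun w hw => ?_) ?_
    · rw [extX_apply _ hw]; simp [extX_apply F hw]
    · rw [extX_apply _ hz]; simp [extX_apply F hz]
  have hmod := modulus_const hstep1 hsub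
  have h0 : ‖F - ContinuousMap.const X (F y)‖ = 0 := by
    rw [← hmod y]; simp
  have hzero : F - ContinuousMap.const X (F y) = 0 := norm_eq_zero.mp h0
  have : F x - F y = 0 := by
    have := congrArg (fun H : C(X, ℂ) => H x) hzero
    simpa using this
  exact sub_eq_zero.mp this

end Compact

end Stmt17Aux

open Stmt17Aux Filter Topology

/-- If `X` is a connected compact plane set for which `D¹(X)` is complete and `z₀ ∈ X`,
then there is `C₁ > 0` with `|f|_X ≤ C₁|f'|_X` whenever `f ∈ D¹(X)` and `f(z₀) = 0`;
consequently there is `C₂ > 0` with `|f(z₀) − f(w)| ≤ C₂|f'|_X|z₀ − w|` for all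
`f ∈ D¹(X)` and `w ∈ X`. -/
theorem stmt17 (X : Set ℂ) (hXc : IsCompact X) (hconn : IsConnected X)
    (hcomp : D1Complete X) (z₀ : ℂ) (hz₀ : z₀ ∈ X) :
    (∃ C₁ > (0:ℝ), ∀ f f' : ℂ → ℂ, HasD1 X f f' → f z₀ = 0 →
      UnifNorm X f ≤ C₁ * UnifNorm X f') ∧
    (∃ C₂ > (0:ℝ), ∀ f f' : ℂ → ℂ, HasD1 X f f' → ∀ w ∈ X,
      ‖f z₀ - f w‖ ≤ C₂ * UnifNorm X f' * ‖z₀ - w‖) := by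

  haveI hCS : CompactSpace X := isCompact_iff_compactSpace.mp hXc
  haveI hNE : Nonempty X := hconn.nonempty.to_subtype
  haveI hconnS : ConnectedSpace X := Subtype.connectedSpace hconn
  have hSclosed : IsClosed ((SS X : Set (C(X, ℂ) × C(X, ℂ)))) := isClosed_SS hcomp
  have hstep1 : ∀ z : X, ∃ A : ℝ, 1 ≤ A ∧ ∀ F G : C(X, ℂ), (F, G) ∈ SS X → ∀ w : X,
      ‖F z - F w‖ ≤ A * (‖F‖ + ‖G‖) * ‖(z : ℂ) - (w : ℂ)‖ :=
    fun z => step1 hSclosed z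
  choose A hA1 hA using hstep1
  have part1 : ∃ C₁ > (0:ℝ), ∀ f f' : ℂ → ℂ, HasD1 X f f' → f z₀ = 0 →
      UnifNorm X f ≤ C₁ * UnifNorm X f' := by
    by_contra hcon
    push_neg at hcon
    have hsel : ∀ n : ℕ, ∃ f f' : ℂ → ℂ, HasD1 X f f' ∧ f z₀ = 0 ∧ UnifNorm X f = 1 ∧
        UnifNorm X f' ≤ 1 / (n + 1) := by
      intro n
      obtain ⟨f, f', hD, h0, hlt⟩ := hcon (n + 1) (by positivity)
      have hUf : 0 < UnifNorm X f :=
        lt_of_le_of_lt (mul_nonneg (by positivity) (unifNorm_nonneg X f')) hlt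
      set c : ℂ := ((UnifNorm X f : ℝ) : ℂ)⁻¹ with hc
      have hcabs : ‖c‖ = (UnifNorm X f)⁻¹ := by
        rw [hc, norm_inv, Complex.norm_real, Real.norm_eq_abs, abs_of_pos hUf]
      refine ⟨fun z => c * f z, fun z => c * f' z, ⟨fun z hz => (hD.1 z hz).const_mul c,
        continuousOn_const.mul hD.2⟩, by simp [h0], ?_, ?_⟩
      · rw [unifNorm_smul hXc (hasD1_contOn hD), hcabs, inv_mul_cancel₀ hUf.ne']
      · rw [unifNorm_smul hXc hD.2, hcabs]
        have h2 : UnifNorm X f' ≤ UnifNorm X f / (n + 1) := by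
          rw [le_div_iff₀ (by positivity)]
          nlinarith [hlt]
        calc (UnifNorm X f)⁻¹ * UnifNorm X f' ≤ (UnifNorm X f)⁻¹ * (UnifNorm X f / (n + 1)) :=
            mul_le_mul_of_nonneg_left h2 (by positivity)
          _ = 1 / (n + 1) := by field_simp
    choose h h' hD h0 hU1 hU' using hsel
    set e := ContinuousMap.isometryEquivBoundedOfCompact X ℂ with he
    set b : ℕ → BoundedContinuousFunction X ℂ := fun n => e (restr (hasD1_contOn (hD n))) with hb
    have hbeval : ∀ n (x : X), b n x = h n x := fun n x => rfl
    have hin : ∀ n (x : X), b n x ∈ Metric.closedBall (0 : ℂ) 1 := by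
      intro n x
      rw [Metric.mem_closedBall, dist_zero_right, hbeval]
      rw [← hU1 n]
      exact le_unifNorm hXc (hasD1_contOn (hD n)) x.2
    have hnormb : ∀ n, ‖restr (hasD1_contOn (hD n))‖ = 1 := by
      intro n; rw [norm_restr]; exact hU1 n
    have hnormb' : ∀ n, ‖restr (hD n).2‖ ≤ 1 / (n + 1) := by
      intro n; rw [norm_restr]; exact hU' n
    have hequi : Equicontinuous ((↑) : Set.range b → X → ℂ) := by
      intro x
      rw [Metric.equicontinuousAt_iff]
      intro ε hε
      have hApos : (0:ℝ) < A x := lt_of_lt_of_le one_pos (hA1 x)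
      refine ⟨ε / (4 * A x), div_pos hε (by linarith), fun y hy i => ?_⟩
      obtain ⟨n, hn⟩ := i.2
      rw [← hn, hbeval, hbeval]
      have hAx := hA x (restr (hasD1_contOn (hD n))) (restr (hD n).2) (mem_SS (hD n)) y
      rw [restr_apply, restr_apply, hnormb n] at hAx
      have hsum : (1 : ℝ) + ‖restr (hD n).2‖ ≤ 2 := by
        have := hnormb' n
        have h1n : (1:ℝ) / (n + 1) ≤ 1 := by
          rw [div_le_one (by positivity)]; linarith [Nat.cast_nonneg (α := ℝ) n]
        linarith
      have habs : ‖(x : ℂ) - (y : ℂ)‖ < ε / (4 * A x) := by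
        rw [Subtype.dist_eq, Complex.dist_eq] at hy
        rwa [norm_sub_rev]
      rw [Complex.dist_eq]
      calc ‖h n x - h n y‖ ≤ A x * (1 + ‖restr (hD n).2‖) * ‖(x:ℂ) - (y:ℂ)‖ := hAx
        _ ≤ A x * 2 * ‖(x:ℂ) - (y:ℂ)‖ := by
            refine mul_le_mul_of_nonneg_right (mul_le_mul_of_nonneg_left hsum hApos.le)
              (norm_nonneg _)
        _ < A x * 2 * (ε / (4 * A x)) := by
            refine mul_lt_mul_of_pos_left habs (by positivity)
        _ ≤ ε := by
            have hEq : A x * 2 * (ε / (4 * A x)) = ε / 2 := by field_simp; ring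
            rw [hEq]; linarith
    have hcpt := BoundedContinuousFunction.arzela_ascoli (Metric.closedBall (0:ℂ) 1)
      (isCompact_closedBall _ _) (Set.range b)
      (fun f x hf => by obtain ⟨n, rfl⟩ := hf; exact hin n x) hequi
    obtain ⟨Hb, hHbmem, φ, hφmono, hφtend⟩ :=
      hcpt.tendsto_subseq (fun n => subset_closure (Set.mem_range_self n))
    set H : C(X, ℂ) := e.symm Hb with hH
    have hFtend : Tendsto (fun k => restr (hasD1_contOn (hD (φ k)))) atTop (𝓝 H) := by
      have ht : Tendsto (fun k => e.symm (b (φ k))) atTop (𝓝 (e.symm Hb)) :=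
        (e.symm.continuous.tendsto Hb).comp hφtend
      exact ht
    have hGtend : Tendsto (fun k => restr ((hD (φ k)).2)) atTop (𝓝 (0 : C(X, ℂ))) := by
      have hb2 : ∀ k : ℕ, ‖restr ((hD (φ k)).2)‖ ≤ 1 / ((k : ℝ) + 1) := by
        intro k
        refine le_trans (hnormb' (φ k)) (one_div_le_one_div_of_le (by positivity) ?_)
        exact_mod_cast add_le_add_left (Nat.cast_le.mpr hφmono.le_apply) 1
      exact squeeze_zero_norm hb2 tendsto_one_div_add_atTop_nhds_zero_nat
    have hmemS : (H, (0 : C(X, ℂ))) ∈ SS X :=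
      hSclosed.mem_of_tendsto (hFtend.prodMk_nhds hGtend)
        (Filter.Eventually.of_forall fun k => mem_SS (hD (φ k)))
    have hHz₀ : H ⟨z₀, hz₀⟩ = 0 := by
      have t1 : Tendsto (fun k => (restr (hasD1_contOn (hD (φ k)))) ⟨z₀, hz₀⟩) atTop
          (𝓝 (H ⟨z₀, hz₀⟩)) :=
        ((continuous_eval_const (⟨z₀, hz₀⟩ : X)).tendsto H).comp hFtend
      have t2 : ∀ k, (restr (hasD1_contOn (hD (φ k)))) ⟨z₀, hz₀⟩ = 0 := fun k => h0 (φ k)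
      have t3 : Tendsto (fun _ : ℕ => (0 : ℂ)) atTop (𝓝 (H ⟨z₀, hz₀⟩)) := by
        simpa [t2] using t1
      exact tendsto_nhds_unique t3 tendsto_const_nhds
    have hconstH := const_of_deriv_zero (fun z => ⟨A z, hA1 z, hA z⟩) hmemS
    have hH0 : H = 0 := by
      ext x
      rw [hconstH x ⟨z₀, hz₀⟩, hHz₀]; rfl
    have hn1 : Tendsto (fun k => ‖restr (hasD1_contOn (hD (φ k)))‖) atTop (𝓝 ‖H‖) :=
      (continuous_norm.tendsto H).comp hFtend
    have hn2 : Tendsto (fun _ : ℕ => (1:ℝ)) atTop (𝓝 ‖H‖) := by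
      simpa [hnormb] using hn1
    have : ‖H‖ = 1 := tendsto_nhds_unique hn2 tendsto_const_nhds
    rw [hH0, norm_zero] at this
    norm_num at this
  obtain ⟨C₁, hC₁pos, hC₁⟩ := part1
  refine ⟨⟨C₁, hC₁pos, hC₁⟩, ?_⟩
  set z₀' : X := ⟨z₀, hz₀⟩ with hz₀'
  have hApos : (0:ℝ) < A z₀' := lt_of_lt_of_le one_pos (hA1 z₀')
  refine ⟨A z₀' * (C₁ + 1), by positivity, fun f f' hf w hw => ?_⟩
  set g : ℂ → ℂ := fun z => f z - f z₀ with hg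
  have hgD : HasD1 X g f' := ⟨fun z hz => (hf.1 z hz).sub_const _, hf.2⟩
  have hg0 : g z₀ = 0 := sub_self _
  have hUg : UnifNorm X g ≤ C₁ * UnifNorm X f' := hC₁ g f' hgD hg0
  have hb := hA z₀' (restr (hasD1_contOn hgD)) (restr hgD.2) (mem_SS hgD) ⟨w, hw⟩
  rw [restr_apply, restr_apply, norm_restr, norm_restr] at hb
  have heq : g z₀' - g w = f z₀ - f w := by rw [hg]; simp [hz₀']
  rw [heq] at hb
  have hsum : UnifNorm X g + UnifNorm X f' ≤ (C₁ + 1) * UnifNorm X f' := by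
    nlinarith [hUg, unifNorm_nonneg X f']
  calc ‖f z₀ - f w‖
      ≤ A z₀' * (UnifNorm X g + UnifNorm X f') * ‖z₀ - w‖ := hb
    _ ≤ A z₀' * ((C₁ + 1) * UnifNorm X f') * ‖z₀ - w‖ := by
        refine mul_le_mul_of_nonneg_right (mul_le_mul_of_nonneg_left hsum hApos.le)
          (norm_nonneg _)
    _ = A z₀' * (C₁ + 1) * UnifNorm X f' * ‖z₀ - w‖ := by ring
end

section
/- Let z₀, w₀ ∈ ℂ with z₀ ≠ w₀, let γ be a Jordan path from z₀ to w₀ in ℂ with image J, and let B ≥ 0. Then there exists f ∈ D¹(J) with 0 < |f'|_J ≤ 3, f'(z₀) = f'(w₀) = 0, f(z₀) = B, f(w₀) ∈ ℝ≥0, and f(w₀) > f(z₀) + |w₀ − z₀|/2. -/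
open Complex Set

private lemma first_hit {a b : ℝ} (hab : a ≤ b) {h : ℝ → ℝ} (hc : ContinuousOn h (Set.Icc a b))
    {η : ℝ} (ha : h a < η) (hb : η ≤ h b) :
    ∃ c ∈ Set.Icc a b, h c = η ∧ ∀ t ∈ Set.Icc a c, h t ≤ η := by
  set S := Set.Icc a b ∩ h ⁻¹' Set.Ici η with hS
  have hSne : S.Nonempty := ⟨b, ⟨hab, le_refl b⟩, hb⟩
  have hScl : IsClosed S := hc.preimage_isClosed_of_isClosed isClosed_Icc isClosed_Ici
  have hSbdd : BddBelow S := ⟨a, fun t ht => ht.1.1⟩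
  set c := sInf S with hcdef
  have hcS : c ∈ S := hScl.csInf_mem hSne hSbdd
  have hcab : c ∈ Set.Icc a b := hcS.1
  have hivt : η ∈ h '' Set.Icc a c := by
    apply intermediate_value_Icc hcab.1 (hc.mono (Set.Icc_subset_Icc le_rfl hcab.2))
    exact ⟨le_of_lt ha, hcS.2⟩
  obtain ⟨t, htac, hht⟩ := hivt
  have htS : t ∈ S := ⟨⟨htac.1, le_trans htac.2 hcab.2⟩, le_of_eq hht.symm⟩
  have hct : c ≤ t := csInf_le hSbdd htS
  have htc : t = c := le_antisymm htac.2 hct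
  refine ⟨c, hcab, htc ▸ hht, ?_⟩
  intro s hs
  by_contra hcon
  push_neg at hcon
  have hsS : s ∈ S := ⟨⟨hs.1, le_trans hs.2 hcab.2⟩, le_of_lt hcon⟩
  have h1 : c ≤ s := csInf_le hSbdd hsS
  have h2 : s = c := le_antisymm hs.2 h1
  have hcη : h c = η := htc ▸ hht
  rw [h2, hcη] at hcon
  exact lt_irrefl η hcon

private lemma last_hit {a b : ℝ} (hab : a ≤ b) {h : ℝ → ℝ} (hc : ContinuousOn h (Set.Icc a b))
    {η : ℝ} (ha : η ≤ h a) (hb : h b < η) :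
    ∃ c ∈ Set.Icc a b, h c = η ∧ ∀ t ∈ Set.Icc c b, h t ≤ η := by
  set S := Set.Icc a b ∩ h ⁻¹' Set.Ici η with hS
  have hSne : S.Nonempty := ⟨a, ⟨le_refl a, hab⟩, ha⟩
  have hScl : IsClosed S := hc.preimage_isClosed_of_isClosed isClosed_Icc isClosed_Ici
  have hSbdd : BddAbove S := ⟨b, fun t ht => ht.1.2⟩
  set c := sSup S with hcdef
  have hcS : c ∈ S := hScl.csSup_mem hSne hSbdd
  have hcab : c ∈ Set.Icc a b := hcS.1
  have hivt : η ∈ h '' Set.Icc c b := by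
    apply intermediate_value_Icc' hcab.2 (hc.mono (Set.Icc_subset_Icc hcab.1 le_rfl))
    exact ⟨le_of_lt hb, hcS.2⟩
  obtain ⟨t, htcb, hht⟩ := hivt
  have htS : t ∈ S := ⟨⟨le_trans hcab.1 htcb.1, htcb.2⟩, le_of_eq hht.symm⟩
  have hct : t ≤ c := le_csSup hSbdd htS
  have htc : t = c := le_antisymm hct htcb.1
  refine ⟨c, hcab, htc ▸ hht, ?_⟩
  intro s hs
  by_contra hcon
  push_neg at hcon
  have hsS : s ∈ S := ⟨⟨le_trans hcab.1 hs.1, hs.2⟩, le_of_lt hcon⟩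
  have h1 : s ≤ c := le_csSup hSbdd hsS
  have h2 : s = c := le_antisymm h1 hs.1
  have hcη : h c = η := htc ▸ hht
  rw [h2, hcη] at hcon
  exact lt_irrefl η hcon

/-- Let `γ` be a Jordan path from `z₀ = γ(a)` to `w₀ = γ(b)` with image `J`, where
`z₀ ≠ w₀`, and let `B ≥ 0`. Then there is `f ∈ D¹(J)` with `0 < |f'|_J ≤ 3`,
`f'(z₀) = f'(w₀) = 0`, `f(z₀) = B`, `f(w₀)` a nonnegative real, and
`f(w₀) > f(z₀) + |w₀ − z₀|/2`. -/
theorem stmt19 (a b : ℝ) (hab : a < b) (γ : ℝ → ℂ)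
    (hc : ContinuousOn γ (Set.Icc a b)) (hinj : Set.InjOn γ (Set.Icc a b))
    (hne : γ a ≠ γ b) (B : ℝ) (hB : 0 ≤ B) :
    ∃ f f' : ℂ → ℂ, HasD1 (γ '' Set.Icc a b) f f' ∧
      0 < UnifNorm (γ '' Set.Icc a b) f' ∧ UnifNorm (γ '' Set.Icc a b) f' ≤ 3 ∧
      f' (γ a) = 0 ∧ f' (γ b) = 0 ∧ f (γ a) = (B : ℂ) ∧
      (f (γ b)).im = 0 ∧ 0 ≤ (f (γ b)).re ∧
      B + ‖γ b - γ a‖ / 2 < (f (γ b)).re := by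
    classical
  have hab' : a ≤ b := hab.le
  set z₀ := γ a with hz₀def
  set w₀ := γ b with hw₀def
  set d := w₀ - z₀ with hddef
  have hdne : d ≠ 0 := sub_ne_zero.2 (Ne.symm hne)
  have hdpos : 0 < ‖d‖ := by simpa using hdne
  set η := ‖d‖ / 4 with hηdef
  have hηpos : 0 < η := by positivity
  have hd4 : ‖d‖ = 4 * η := by rw [hηdef]; ring
  -- continuity of the distance functions
  have hcz : ContinuousOn (fun t => ‖γ t - z₀‖) (Set.Icc a b) :=
    continuous_norm.comp_continuousOn (hc.sub continuousOn_const)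
  have hcw : ContinuousOn (fun t => ‖γ t - w₀‖) (Set.Icc a b) :=
    continuous_norm.comp_continuousOn (hc.sub continuousOn_const)
  obtain ⟨a', ha'ab, ha'eq, ha'le⟩ :=
    first_hit hab' hcz (by simpa [hz₀def] using hηpos)
      (by show η ≤ ‖γ b - z₀‖; rw [← hw₀def, ← hddef]; linarith)
  obtain ⟨b', hb'ab, hb'eq, hb'le⟩ :=
    last_hit hab' hcw
      (by show η ≤ ‖γ a - w₀‖
          have h0 : ‖γ a - w₀‖ = ‖d‖ := by
            rw [← hz₀def, hddef]; exact norm_sub_rev _ _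
          rw [h0]; linarith)
      (by simpa [hw₀def] using hηpos)
  -- a' < b'
  have ha'b' : a' < b' := by
    by_contra hcon
    push_neg at hcon
    have hmem : a' ∈ Set.Icc b' b := ⟨hcon, ha'ab.2⟩
    have h1 : ‖γ a' - w₀‖ ≤ η := hb'le a' hmem
    have h2 : ‖d‖ ≤ ‖w₀ - γ a'‖ + ‖γ a' - z₀‖ := by
      have : d = (w₀ - γ a') + (γ a' - z₀) := by rw [hddef]; ring
      rw [this]; exact norm_add_le _ _
    have h3 : ‖w₀ - γ a'‖ = ‖γ a' - w₀‖ :=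
      norm_sub_rev _ _
    rw [h3, ha'eq] at h2
    linarith
  set z₁ := γ a' with hz₁def
  set w₁ := γ b' with hw₁def
  have habs1 : ‖z₀ - z₁‖ = η := by
    rw [norm_sub_rev]; exact ha'eq
  have habs3 : ‖w₀ - w₁‖ = η := by
    rw [norm_sub_rev]; exact hb'eq
  have hz01 : z₀ - z₁ ≠ 0 := by
    intro h; rw [h, norm_zero] at habs1; linarith
  have hw01 : w₀ - w₁ ≠ 0 := by
    intro h; rw [h, norm_zero] at habs3; linarith
  -- the three pieces
  set J₁ := γ '' Set.Icc a a' with hJ₁def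
  set J₂ := γ '' Set.Icc a' b' with hJ₂def
  set J₃ := γ '' Set.Icc b' b with hJ₃def
  have hsub1 : Set.Icc a a' ⊆ Set.Icc a b := Set.Icc_subset_Icc le_rfl ha'ab.2
  have hsub2 : Set.Icc a' b' ⊆ Set.Icc a b := Set.Icc_subset_Icc ha'ab.1 hb'ab.2
  have hsub3 : Set.Icc b' b ⊆ Set.Icc a b := Set.Icc_subset_Icc hb'ab.1 le_rfl
  have hJsplit : γ '' Set.Icc a b = (J₁ ∪ J₂) ∪ J₃ := by
    rw [hJ₁def, hJ₂def, hJ₃def, ← Set.image_union, ← Set.image_union,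
      Set.Icc_union_Icc_eq_Icc ha'ab.1 ha'b'.le,
      Set.Icc_union_Icc_eq_Icc (le_trans ha'ab.1 ha'b'.le) hb'ab.2]
  have hJ₁c : IsClosed J₁ := (isCompact_Icc.image_of_continuousOn (hc.mono hsub1)).isClosed
  have hJ₂c : IsClosed J₂ := (isCompact_Icc.image_of_continuousOn (hc.mono hsub2)).isClosed
  have hJ₃c : IsClosed J₃ := (isCompact_Icc.image_of_continuousOn (hc.mono hsub3)).isClosed
  -- intersections
  have hJ12 : ∀ z, z ∈ J₁ → z ∈ J₂ → z = z₁ := by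
    rintro z ⟨s, hs, rfl⟩ ⟨t, ht, hts⟩
    have hst : t = s := hinj (hsub2 ht) (hsub1 hs) hts
    have : s = a' := le_antisymm hs.2 (hst ▸ ht.1)
    rw [this, hz₁def]
  have hJ23 : ∀ z, z ∈ J₂ → z ∈ J₃ → z = w₁ := by
    rintro z ⟨s, hs, rfl⟩ ⟨t, ht, hts⟩
    have hst : t = s := hinj (hsub3 ht) (hsub2 hs) hts
    have : s = b' := le_antisymm hs.2 (hst ▸ ht.1)
    rw [this, hw₁def]
  have hJ13 : ∀ z, z ∈ J₁ → z ∈ J₃ → False := by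
    rintro z ⟨s, hs, rfl⟩ ⟨t, ht, hts⟩
    have hst : t = s := hinj (hsub3 ht) (hsub1 hs) hts
    have : b' ≤ a' := le_trans (hst ▸ ht.1) hs.2
    linarith
  -- constants
  set k₁ : ℂ := (2 * (z₀ - z₁))⁻¹ with hk₁def
  set k₃ : ℂ := (2 * (w₀ - w₁))⁻¹ with hk₃def
  set cc : ℂ := d + (z₀ - z₁) / 2 - (w₀ - w₁) / 2 with hccdef
  have hccabs : 3 * η ≤ ‖cc‖ := by
    have hs1 : ‖(z₀ - z₁) / 2 - (w₀ - w₁) / 2‖ ≤ η := by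
      have h1 : ‖(z₀ - z₁) / 2 - (w₀ - w₁) / 2‖
          ≤ ‖(z₀ - z₁) / 2‖ + ‖(w₀ - w₁) / 2‖ := by
        have := norm_add_le ((z₀ - z₁) / 2) (-((w₀ - w₁) / 2))
        simpa [sub_eq_add_neg] using this
      rw [norm_div, norm_div, habs1, habs3, Complex.norm_two] at h1
      linarith
    have h2 : ‖d‖ ≤ ‖cc‖ + ‖(z₀ - z₁) / 2 - (w₀ - w₁) / 2‖ := by
      have he : d = cc - ((z₀ - z₁) / 2 - (w₀ - w₁) / 2) := by rw [hccdef]; ring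
      calc ‖d‖ = ‖cc + -((z₀ - z₁) / 2 - (w₀ - w₁) / 2)‖ := by
            rw [he, sub_eq_add_neg]
        _ ≤ ‖cc‖ + ‖-((z₀ - z₁) / 2 - (w₀ - w₁) / 2)‖ :=
            norm_add_le _ _
        _ = ‖cc‖ + ‖(z₀ - z₁) / 2 - (w₀ - w₁) / 2‖ := by
            rw [norm_neg]
    linarith
  have hccne : cc ≠ 0 := by
    intro h; rw [h, norm_zero] at hccabs; linarith
  have hccabsne : (‖cc‖ : ℝ) ≠ 0 := by
    intro h; rw [h] at hccabs; linarith
  set u : ℂ := (‖cc‖ : ℂ) / cc with hudef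
  have huabs : ‖u‖ = 1 := by
    rw [hudef, norm_div, Complex.norm_real, Real.norm_eq_abs, _root_.abs_of_nonneg (norm_nonneg cc)]
    exact div_self hccabsne
  have hucc : u * cc = (‖cc‖ : ℂ) := by
    rw [hudef]; field_simp
  -- the functions
  set h₁ : ℂ → ℂ := fun z => B + u * (z - z₀ - (z - z₁) ^ 2 * k₁ + (z₀ - z₁) / 2) with hh₁
  set h₂ : ℂ → ℂ := fun z => B + u * (z - z₀ + (z₀ - z₁) / 2) with hh₂
  set h₃ : ℂ → ℂ := fun z => B + u * (z - z₀ - (z - w₁) ^ 2 * k₃ + (z₀ - z₁) / 2) with hh₃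
  set d₁ : ℂ → ℂ := fun z => u * (1 - 2 * (z - z₁) * k₁) with hd₁
  set d₃ : ℂ → ℂ := fun z => u * (1 - 2 * (z - w₁) * k₃) with hd₃
  set f : ℂ → ℂ := fun z => if z ∈ J₁ then h₁ z else if z ∈ J₃ then h₃ z else h₂ z with hf
  set f' : ℂ → ℂ := fun z => if z ∈ J₁ then d₁ z else if z ∈ J₃ then d₃ z else u with hf'
  -- derivatives of the pieces
  have Hd₁ : ∀ w : ℂ, HasDerivAt h₁ (d₁ w) w := by
    intro w
    rw [hh₁, hd₁]
    have h := ((((hasDerivAt_id w).sub_const z₀).sub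
      ((((hasDerivAt_id w).sub_const z₁).pow 2).mul_const k₁)).add_const
      ((z₀ - z₁) / 2)).const_mul u |>.const_add (B : ℂ)
    refine HasDerivAt.congr_deriv h ?_
    simp
  have Hd₂ : ∀ w : ℂ, HasDerivAt h₂ u w := by
    intro w
    rw [hh₂]
    have h := (((hasDerivAt_id w).sub_const z₀).add_const
      ((z₀ - z₁) / 2)).const_mul u |>.const_add (B : ℂ)
    refine HasDerivAt.congr_deriv h ?_
    ring
  have Hd₃ : ∀ w : ℂ, HasDerivAt h₃ (d₃ w) w := by
    intro w
    rw [hh₃, hd₃]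
    have h := ((((hasDerivAt_id w).sub_const z₀).sub
      ((((hasDerivAt_id w).sub_const w₁).pow 2).mul_const k₃)).add_const
      ((z₀ - z₁) / 2)).const_mul u |>.const_add (B : ℂ)
    refine HasDerivAt.congr_deriv h ?_
    simp
  -- agreement of pieces at junctions
  have hval_z₁ : h₁ z₁ = h₂ z₁ := by rw [hh₁, hh₂]; dsimp only; ring
  have hval_w₁ : h₃ w₁ = h₂ w₁ := by rw [hh₃, hh₂]; dsimp only; ring
  have hdz₁ : d₁ z₁ = u := by rw [hd₁]; dsimp only; ring
  have hdw₁ : d₃ w₁ = u := by rw [hd₃]; dsimp only; ring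
  -- EqOn facts
  have E₁ : Set.EqOn f h₁ J₁ := by
    intro z hz; rw [hf]; dsimp only; rw [if_pos hz]
  have E₃ : Set.EqOn f h₃ J₃ := by
    intro z hz
    have h1 : z ∉ J₁ := fun hz1 => hJ13 z hz1 hz
    rw [hf]; dsimp only; rw [if_neg h1, if_pos hz]
  have E₂ : Set.EqOn f h₂ J₂ := by
    intro z hz
    rw [hf]; dsimp only
    by_cases h1 : z ∈ J₁
    · rw [if_pos h1, hJ12 z h1 hz]; exact hval_z₁
    · rw [if_neg h1]
      by_cases h3 : z ∈ J₃
      · rw [if_pos h3, hJ23 z hz h3]; exact hval_w₁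
      · rw [if_neg h3]
  have F₁ : Set.EqOn f' d₁ J₁ := by
    intro z hz; rw [hf']; dsimp only; rw [if_pos hz]
  have F₃ : Set.EqOn f' d₃ J₃ := by
    intro z hz
    have h1 : z ∉ J₁ := fun hz1 => hJ13 z hz1 hz
    rw [hf']; dsimp only; rw [if_neg h1, if_pos hz]
  have F₂ : Set.EqOn f' (fun _ => u) J₂ := by
    intro z hz
    rw [hf']; dsimp only
    by_cases h1 : z ∈ J₁
    · rw [if_pos h1, hJ12 z h1 hz]; exact hdz₁
    · rw [if_neg h1]
      by_cases h3 : z ∈ J₃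
      · rw [if_pos h3, hJ23 z hz h3]; exact hdw₁
      · rw [if_neg h3]
  -- differentiability pieces
  have piece : ∀ (s : Set ℂ), IsClosed s → ∀ (g g' : ℂ → ℂ), Set.EqOn f g s →
      Set.EqOn f' g' s → (∀ w, HasDerivAt g (g' w) w) →
      ∀ z : ℂ, HasDerivWithinAt f (f' z) s z := by
    intro s hs g g' hfg hfg' hg z
    by_cases hz : z ∈ s
    · have h := ((hg z).hasDerivWithinAt).congr (fun x hx => hfg hx) (hfg hz)
      rwa [hfg' hz]
    · exact HasFDerivWithinAt.of_notMem_closure (by rwa [hs.closure_eq])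
  have hderiv : ∀ z ∈ γ '' Set.Icc a b, HasDerivWithinAt f (f' z) (γ '' Set.Icc a b) z := by
    intro z hz
    rw [hJsplit]
    exact ((piece J₁ hJ₁c h₁ d₁ E₁ F₁ Hd₁ z).union
      (piece J₂ hJ₂c h₂ (fun _ => u) E₂ F₂ Hd₂ z)).union
      (piece J₃ hJ₃c h₃ d₃ E₃ F₃ Hd₃ z)
  -- continuity of f'
  have cont_d₁ : Continuous d₁ := by rw [hd₁]; fun_prop
  have cont_d₃ : Continuous d₃ := by rw [hd₃]; fun_prop
  have cpiece : ∀ (s : Set ℂ), IsClosed s → ∀ (g' : ℂ → ℂ), Set.EqOn f' g' s →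
      Continuous g' → ∀ z : ℂ, ContinuousWithinAt f' s z := by
    intro s hs g' hfg' hg z
    by_cases hz : z ∈ s
    · exact (hg.continuousWithinAt).congr hfg' (hfg' hz)
    · exact continuousWithinAt_of_notMem_closure (by rwa [hs.closure_eq])
  have hcontf' : ContinuousOn f' (γ '' Set.Icc a b) := by
    intro z hz
    rw [hJsplit]
    exact ((cpiece J₁ hJ₁c d₁ F₁ cont_d₁ z).union
      (cpiece J₂ hJ₂c (fun _ => u) F₂ continuous_const z)).union
      (cpiece J₃ hJ₃c d₃ F₃ cont_d₃ z)
  -- algebraic simplifications of the derivatives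
  have hd₁eq : ∀ z : ℂ, (1 : ℂ) - 2 * (z - z₁) * k₁ = (z₀ - z) / (z₀ - z₁) := by
    intro z; rw [hk₁def]; field_simp; ring
  have hd₃eq : ∀ z : ℂ, (1 : ℂ) - 2 * (z - w₁) * k₃ = (w₀ - z) / (w₀ - w₁) := by
    intro z; rw [hk₃def]; field_simp; ring
  -- bound on |f'|
  have habs_d₁ : ∀ z ∈ J₁, ‖d₁ z‖ ≤ 1 := by
    rintro z ⟨t, ht, rfl⟩
    rw [hd₁]; dsimp only
    rw [hd₁eq, norm_mul, huabs, one_mul, norm_div, habs1]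
    rw [div_le_one hηpos, norm_sub_rev]
    exact ha'le t ht
  have habs_d₃ : ∀ z ∈ J₃, ‖d₃ z‖ ≤ 1 := by
    rintro z ⟨t, ht, rfl⟩
    rw [hd₃]; dsimp only
    rw [hd₃eq, norm_mul, huabs, one_mul, norm_div, habs3]
    rw [div_le_one hηpos, norm_sub_rev]
    exact hb'le t ht
  have habs_f' : ∀ z ∈ γ '' Set.Icc a b, ‖f' z‖ ≤ 1 := by
    intro z hz
    rw [hJsplit] at hz
    rcases hz with (hz | hz) | hz
    · rw [F₁ hz]; exact habs_d₁ z hz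
    · rw [F₂ hz]; rw [huabs]
    · rw [F₃ hz]; exact habs_d₃ z hz
  -- membership facts
  have hz₀J₁ : z₀ ∈ J₁ := ⟨a, ⟨le_rfl, ha'ab.1⟩, rfl⟩
  have hz₁J₁ : z₁ ∈ J₁ := ⟨a', ⟨ha'ab.1, le_rfl⟩, rfl⟩
  have hw₀J₃ : w₀ ∈ J₃ := ⟨b, ⟨hb'ab.2, le_rfl⟩, rfl⟩
  have hz₁J : z₁ ∈ γ '' Set.Icc a b := ⟨a', ha'ab, rfl⟩
  have hw₀J₁ : w₀ ∉ J₁ := by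
    rintro ⟨t, ht, hteq⟩
    have : t = b := hinj (hsub1 ht) (Set.right_mem_Icc.2 hab') hteq
    rw [this] at ht
    have : b ≤ a' := ht.2
    linarith [ha'b', hb'ab.2]
  -- norm bounds for UnifNorm
  have hbdd : BddAbove ((fun z => ‖f' z‖) '' (γ '' Set.Icc a b)) := by
    refine ⟨1, ?_⟩
    rintro x ⟨z, hz, rfl⟩
    exact habs_f' z hz
  have hf'z₁ : f' z₁ = u := by rw [F₁ hz₁J₁]; exact hdz₁
  have h1mem : (1 : ℝ) ∈ (fun z => ‖f' z‖) '' (γ '' Set.Icc a b) :=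
    ⟨z₁, hz₁J, by show ‖f' z₁‖ = 1; rw [hf'z₁, huabs]⟩
  -- endpoint values
  have hf'z₀ : f' z₀ = 0 := by
    rw [F₁ hz₀J₁, hd₁]; dsimp only
    rw [hd₁eq, sub_self, zero_div, mul_zero]
  have hf'w₀ : f' w₀ = 0 := by
    rw [F₃ hw₀J₃, hd₃]; dsimp only
    rw [hd₃eq, sub_self, zero_div, mul_zero]
  have hsq₁ : (z₀ - z₁) ^ 2 * k₁ = (z₀ - z₁) / 2 := by
    rw [hk₁def]; field_simp
  have hsq₃ : (w₀ - w₁) ^ 2 * k₃ = (w₀ - w₁) / 2 := by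
    rw [hk₃def]; field_simp
  have hfz₀ : f z₀ = (B : ℂ) := by
    rw [E₁ hz₀J₁, hh₁]; dsimp only
    rw [hsq₁]; ring
  have hfw₀ : f w₀ = (B : ℂ) + (‖cc‖ : ℂ) := by
    rw [E₃ hw₀J₃, hh₃]; dsimp only
    rw [hsq₃]
    have he : w₀ - z₀ - (w₀ - w₁) / 2 + (z₀ - z₁) / 2 = cc := by rw [hccdef, hddef]; ring
    rw [he, hucc]
  -- assemble
  refine ⟨f, f', ⟨hderiv, hcontf'⟩, ?_, ?_, ?_, ?_, ?_, ?_, ?_, ?_⟩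
  · have hle : (1 : ℝ) ≤ UnifNorm (γ '' Set.Icc a b) f' := le_csSup hbdd h1mem
    linarith
  · refine Real.sSup_le ?_ (by norm_num)
    rintro x ⟨z, hz, rfl⟩
    linarith [habs_f' z hz]
  · exact hf'z₀
  · exact hf'w₀
  · exact hfz₀
  · rw [hfw₀]; simp
  · rw [hfw₀]; simp
    positivity
  · rw [hfw₀]
    have hre : ((B : ℂ) + (‖cc‖ : ℂ)).re = B + ‖cc‖ := by simp
    rw [hre]
    linarith
end
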